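/- arXiv:1905.10287 — 4 statements merged into one kernel-verified Lean document; each statement's English description precedes it below -/
import Mathlib

section
/- For every infinite Hausdorff topological space X, USC*_p(X) does not satisfy the selection principle S₁(𝒫, 𝒟): there exists a sequence ⟨Sₙ : n ∈ ω⟩ of pointwise dense subsets of USC*_p(X) such that no choice of fₙ ∈ Sₙ makes {fₙ : n ∈ ω} dense in USC*_p(X). -/
open Set Filter Topology

namespace Selectors

variable {X : Type*}

/-- Kinds of covers / of pointwise properties: `o` (ordinary covers / 𝒪),
`omega` (ω-covers / Ω), `gamma` (γ-covers / Γ). -/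
inductive CoverKind : Type
  | o | omega | gamma

/-- `f` is a bounded upper semicontinuous real function on `X`. -/
def IsUSCb [TopologicalSpace X] (f : X → ℝ) : Prop :=
  (∀ a : ℝ, IsOpen {x | f x < a}) ∧ ∃ M : ℝ, ∀ x, |f x| ≤ M

/-- `USC*_p(X)`: the set of bounded upper semicontinuous real functions on `X`,
regarded as a subset of `X → ℝ` with the product (pointwise convergence) topology. -/
def USCb (X : Type*) [TopologicalSpace X] : Set (X → ℝ) := {f | IsUSCb f}

/-- `C*_p(X)`: the set of bounded continuous real functions on `X`. -/
def Cb (X : Type*) [TopologicalSpace X] : Set (X → ℝ) :=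
  {f | Continuous f ∧ ∃ M : ℝ, ∀ x, |f x| ≤ M}

/-- `𝒰` is a cover of `X`. -/
def IsCover (𝒰 : Set (Set X)) : Prop := ∀ x : X, ∃ U ∈ 𝒰, x ∈ U

/-- The (not necessarily open) cover condition of the given kind:
an `o`-cover is a cover; an ω-cover is a cover not containing `X` such that every
finite subset of `X` is contained in a member; a γ-cover is an infinite cover such
that each point belongs to all but finitely many members. -/
def kindSets (k : CoverKind) (𝒰 : Set (Set X)) : Prop :=
  match k with
  | .o => IsCover 𝒰
  | .omega => IsCover 𝒰 ∧ Set.univ ∉ 𝒰 ∧ ∀ F : Set X, F.Finite → ∃ U ∈ 𝒰, F ⊆ U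
  | .gamma => IsCover 𝒰 ∧ 𝒰.Infinite ∧ ∀ x : X, {U ∈ 𝒰 | x ∉ U}.Finite

/-- The family `𝒪(X)`, `Ω(X)` or `Γ(X)` of open covers/ω-covers/γ-covers of `X`. -/
def OpenKindCovers (X : Type*) [TopologicalSpace X] (k : CoverKind) : Set (Set (Set X)) :=
  {𝒰 | (∀ U ∈ 𝒰, IsOpen U) ∧ kindSets k 𝒰}

/-- The selection principle `S₁(A, B)`. -/
def S1 {α : Type*} (A B : Set (Set α)) : Prop :=
  ∀ u : ℕ → Set α, (∀ n, u n ∈ A) →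
    ∃ sel : ℕ → α, (∀ n, sel n ∈ u n) ∧ Set.range sel ∈ B

/-- The selection principle `S_fin(A, B)`. -/
def Sfin {α : Type*} (A B : Set (Set α)) : Prop :=
  ∀ u : ℕ → Set α, (∀ n, u n ∈ A) →
    ∃ V : ℕ → Set α, (∀ n, V n ⊆ u n ∧ (V n).Finite) ∧ (⋃ n, V n) ∈ B

/-- Property `(𝒪_h)` of a family `F` of real functions. -/
def PropO (h : X → ℝ) (F : Set (X → ℝ)) : Prop :=
  ∀ x : X, h x ∈ closure ((fun f : X → ℝ => f x) '' F)

/-- Property `(Ω_h)`: `h ∉ F` and `h` belongs to the closure of `F` in `ℝ^X`. -/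
def PropOmega (h : X → ℝ) (F : Set (X → ℝ)) : Prop :=
  h ∉ F ∧ h ∈ closure F

/-- Property `(Γ_h)`. -/
def PropGamma (h : X → ℝ) (F : Set (X → ℝ)) : Prop :=
  F.Infinite ∧ ∀ ε : ℝ, 0 < ε → ∀ x : X, {f ∈ F | ε ≤ |f x - h x|}.Finite

/-- Property `(Φ_h)` for `Φ = 𝒪, Ω, Γ`. -/
def kindProp (k : CoverKind) (h : X → ℝ) (F : Set (X → ℝ)) : Prop :=
  match k with
  | .o => PropO h F
  | .omega => PropOmega h F
  | .gamma => PropGamma h F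

/-- The family `Φ_h(H) = {F ⊆ H : F has (Φ_h) and ∀ f ∈ F, f ≥ h ∧ f - h ∈ H}`. -/
def PhiH (k : CoverKind) (h : X → ℝ) (H : Set (X → ℝ)) : Set (Set (X → ℝ)) :=
  {F | F ⊆ H ∧ kindProp k h F ∧ ∀ f ∈ F, h ≤ f ∧ f - h ∈ H}

/-- `F ⊆ H` is sequentially dense in `H` (with respect to pointwise convergence). -/
def SeqDenseIn (F H : Set (X → ℝ)) : Prop :=
  F ⊆ H ∧ ∀ f ∈ H, ∃ u : ℕ → (X → ℝ), (∀ n, u n ∈ F) ∧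
    Filter.Tendsto u Filter.atTop (nhds f)

/-- `F ⊆ H` is dense in `H`. -/
def DenseIn (F H : Set (X → ℝ)) : Prop :=
  F ⊆ H ∧ H ⊆ closure F

/-- `F` is pointwise dense: `{f x : f ∈ F}` is dense in `ℝ` for every `x`. -/
def PointwiseDense (F : Set (X → ℝ)) : Prop :=
  ∀ x : X, Dense {y : ℝ | ∃ f ∈ F, f x = y}

/-- `F ⊆ H` is upper sequentially dense in `H`. -/
def UpperSeqDenseIn (F H : Set (X → ℝ)) : Prop :=
  F ⊆ H ∧ ∀ f ∈ H, ∃ u : ℕ → (X → ℝ),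
    (∀ n, u n ∈ F ∧ f ≤ u n ∧ u n - f ∈ H) ∧
    Filter.Tendsto u Filter.atTop (nhds f)

/-- `F ⊆ H` is upper dense in `H`: for every `f ∈ H` the set
`{h ∈ F : h ≥ f ∧ h - f ∈ H}` is dense in `{h ∈ H : h ≥ f}`. -/
def UpperDenseIn (F H : Set (X → ℝ)) : Prop :=
  F ⊆ H ∧ ∀ f ∈ H, {g | g ∈ H ∧ f ≤ g} ⊆ closure {g | g ∈ F ∧ f ≤ g ∧ g - f ∈ H}

/-- `𝒮(H)`: the family of sequentially dense subsets of `H`. -/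
def Sfam (H : Set (X → ℝ)) : Set (Set (X → ℝ)) := {F | SeqDenseIn F H}

/-- `𝒟(H)`: the family of dense subsets of `H`. -/
def Dfam (H : Set (X → ℝ)) : Set (Set (X → ℝ)) := {F | DenseIn F H}

/-- `𝒫(H)`: the family of pointwise dense subsets of `H`. -/
def Pfam (H : Set (X → ℝ)) : Set (Set (X → ℝ)) := {F | F ⊆ H ∧ PointwiseDense F}

/-- `Φ̃↑(H)`: for `Φ = Γ` the upper sequentially dense subsets, for `Φ = Ω`
the upper dense subsets, for `Φ = 𝒪` the pointwise dense subsets of `H`. -/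
def upTilde (k : CoverKind) (H : Set (X → ℝ)) : Set (Set (X → ℝ)) :=
  match k with
  | .o => Pfam H
  | .omega => {F | UpperDenseIn F H}
  | .gamma => {F | UpperSeqDenseIn F H}

/-- `H` is separable: it has a countable dense subset. -/
def SeparableSet (H : Set (X → ℝ)) : Prop := ∃ D, D.Countable ∧ DenseIn D H

/-- `H` is sequentially separable: it has a countable sequentially dense subset. -/
def SeqSeparableSet (H : Set (X → ℝ)) : Prop := ∃ D, D.Countable ∧ SeqDenseIn D H

/-- Property `(ε)`: every open ω-cover contains a countable ω-subcover. -/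
def PropEps (X : Type*) [TopologicalSpace X] : Prop :=
  ∀ 𝒰 : Set (Set X), 𝒰 ∈ OpenKindCovers X CoverKind.omega →
    ∃ 𝒱 ⊆ 𝒰, 𝒱.Countable ∧ 𝒱 ∈ OpenKindCovers X CoverKind.omega

/-- `S` is an `F_σ` set with respect to the topology `t`. -/
def IsFsigmaIn (t : TopologicalSpace X) (S : Set X) : Prop :=
  ∃ C : ℕ → Set X, (∀ n, IsClosed[t] (C n)) ∧ S = ⋃ n, C n

/-- `S` is locally closed with respect to `t`: an intersection of a `t`-open
and a `t`-closed set. -/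
def IsLocallyClosedIn (t : TopologicalSpace X) (S : Set X) : Prop :=
  ∃ U F : Set X, IsOpen[t] U ∧ IsClosed[t] F ∧ S = U ∩ F

/-- `S` is a cozero set with respect to `t`. -/
def IsCozeroIn (t : TopologicalSpace X) (S : Set X) : Prop :=
  ∃ f : X → ℝ, @Continuous X ℝ t inferInstance f ∧ S = {x | f x ≠ 0}

/-- The `OB`-property of `⟨X, t⟩`: there is a separable metrizable topology `t'`
on `X` weaker than `t` such that every locally closed subset of `⟨X, t⟩` is an
`F_σ`-set in `t'`. -/
def OBProperty (X : Type*) [t : TopologicalSpace X] : Prop :=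
  ∃ t' : TopologicalSpace X,
    (∀ s : Set X, IsOpen[t'] s → IsOpen[t] s) ∧
    @TopologicalSpace.MetrizableSpace X t' ∧
    @TopologicalSpace.SeparableSpace X t' ∧
    ∀ S : Set X, IsLocallyClosedIn t S → IsFsigmaIn t' S

/-- The `V`-property of `⟨X, t⟩`: there is a separable metrizable topology `t'`
on `X` weaker than `t` such that every cozero subset of `⟨X, t⟩` is an
`F_σ`-set in `t'`. -/
def VProperty (X : Type*) [t : TopologicalSpace X] : Prop :=
  ∃ t' : TopologicalSpace X,
    (∀ s : Set X, IsOpen[t'] s → IsOpen[t] s) ∧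
    @TopologicalSpace.MetrizableSpace X t' ∧
    @TopologicalSpace.SeparableSpace X t' ∧
    ∀ S : Set X, IsCozeroIn t S → IsFsigmaIn t' S

/-- `iw(X) = ℵ₀`: `X` can be mapped by a one-to-one continuous map onto a
Tychonoff space of countable weight. -/
def IWCountable (X : Type*) [TopologicalSpace X] : Prop :=
  ∃ (Y : Type) (tY : TopologicalSpace Y) (f : X → Y),
    @Continuous X Y _ tY f ∧ Function.Bijective f ∧
    @T35Space Y tY ∧ @SecondCountableTopology Y tY

/-- `Φ^sh(X)`: the family of open shrinkable φ-covers of `X`. -/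
def ShFam (X : Type*) [TopologicalSpace X] (k : CoverKind) : Set (Set (Set X)) :=
  {𝒰 | 𝒰 ∈ OpenKindCovers X k ∧
    ∃ 𝒲 ∈ OpenKindCovers X k, ∀ W ∈ 𝒲, ∃ U ∈ 𝒰, closure W ⊆ U}

/-- A zero set. -/
def IsZeroSet [TopologicalSpace X] (S : Set X) : Prop :=
  ∃ f : X → ℝ, Continuous f ∧ S = {x | f x = 0}

/-- A cozero set. -/
def IsCozeroSet [TopologicalSpace X] (S : Set X) : Prop :=
  ∃ f : X → ℝ, Continuous f ∧ S = {x | f x ≠ 0}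

/-- `Φ^fsh_cz(X)`: the family of functionally shrinkable φ-covers of `X`
consisting of cozero sets. -/
def FshCzFam (X : Type*) [TopologicalSpace X] (k : CoverKind) : Set (Set (Set X)) :=
  {𝒰 | (∀ U ∈ 𝒰, IsCozeroSet U) ∧ kindSets k 𝒰 ∧
    ∃ 𝒲 : Set (Set X), (∀ W ∈ 𝒲, IsZeroSet W) ∧ kindSets k 𝒲 ∧
      ∀ W ∈ 𝒲, ∃ U ∈ 𝒰, closure W ⊆ U}

/-- The function `f_{U,g}`: equal to `0` on `U` and to `1 + sup |g|` off `U`. -/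
noncomputable def fU (U : Set X) (g : X → ℝ) : X → ℝ :=
  Uᶜ.indicator fun _ => 1 + ⨆ y, |g y|

/-- The family `S(𝒰) = {f_{U,g} + g : U ∈ 𝒰, g ∈ USC*_p(X)}`. -/
def SU [TopologicalSpace X] (𝒰 : Set (Set X)) : Set (X → ℝ) :=
  {f | ∃ U ∈ 𝒰, ∃ g ∈ USCb X, f = fU U g + g}

/-- The Sorgenfrey topology on `ℝ`, generated by the half-open intervals `[a, b)`. -/
def sorgenfreyTop : TopologicalSpace ℝ :=
  TopologicalSpace.generateFrom {s | ∃ a b : ℝ, s = Set.Ico a b}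

/-- The Sorgenfrey plane topology on `ℝ × ℝ`. -/
def sorgenfreyPlaneTop : TopologicalSpace (ℝ × ℝ) :=
  @instTopologicalSpaceProd ℝ ℝ sorgenfreyTop sorgenfreyTop


/-- For every infinite Hausdorff space X, USC*_p(X) does not satisfy
S₁(𝒫, 𝒟). -/
theorem statement9 {X : Type*} [TopologicalSpace X] [T2Space X] [Infinite X] :
    ¬ S1 (Pfam (USCb X)) (Dfam (USCb X)) := by
  classical
  intro hS1
  obtain ⟨x₀, x₁, hne⟩ := exists_pair_ne X
  -- the set of constant functions
  set C : Set (X → ℝ) := {f | ∃ c : ℝ, f = fun _ => c} with hC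
  have hCP : C ∈ Pfam (USCb X) := by
    constructor
    · rintro f ⟨c, rfl⟩
      refine ⟨fun a => ?_, ⟨|c|, fun x => le_refl _⟩⟩
      by_cases hca : c < a
      · have : {x : X | (fun _ => c) x < a} = Set.univ := by ext x; simp [hca]
        rw [this]; exact isOpen_univ
      · have : {x : X | (fun _ => c) x < a} = (∅ : Set X) := by ext x; simp [hca]
        rw [this]; exact isOpen_empty
    · intro x
      have : {y : ℝ | ∃ f ∈ C, f x = y} = Set.univ := by
        ext y
        simp only [Set.mem_univ, iff_true, Set.mem_setOf_eq]
        exact ⟨fun _ => y, ⟨y, rfl⟩, rfl⟩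
      rw [this]; exact dense_univ
  obtain ⟨sel, hsel, hdense⟩ := hS1 (fun _ => C) (fun _ => hCP)
  -- target function: indicator of the point x₀
  set h : X → ℝ := fun x => if x = x₀ then 1 else 0 with hh
  have hUSC : h ∈ USCb X := by
    constructor
    · intro a
      by_cases h1 : (1 : ℝ) < a
      · have : {x : X | h x < a} = Set.univ := by
          ext x
          simp only [Set.mem_univ, iff_true, Set.mem_setOf_eq, hh]
          by_cases hx : x = x₀ <;> simp [hx] <;> linarith
        rw [this]; exact isOpen_univ
      · by_cases h0 : (0 : ℝ) < a
        · have : {x : X | h x < a} = {x₀}ᶜ := by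
            ext x
            simp only [Set.mem_compl_iff, Set.mem_singleton_iff, Set.mem_setOf_eq, hh]
            by_cases hx : x = x₀ <;> simp [hx, h0]
            linarith
          rw [this]; exact isOpen_compl_singleton
        · have : {x : X | h x < a} = (∅ : Set X) := by
            ext x
            simp only [Set.mem_empty_iff_false, iff_false, Set.mem_setOf_eq, hh, not_lt]
            by_cases hx : x = x₀ <;> simp [hx] <;> linarith
          rw [this]; exact isOpen_empty
    · exact ⟨1, fun x => by by_cases hx : x = x₀ <;> simp [hh, hx]⟩
  have hcl : h ∈ closure (Set.range sel) := hdense.2 hUSC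
  -- the open neighborhood of h avoiding all constants
  have hUopen : IsOpen {g : X → ℝ | (1 : ℝ) / 2 < g x₀ ∧ g x₁ < 1 / 2} := by
    have : {g : X → ℝ | (1 : ℝ) / 2 < g x₀ ∧ g x₁ < 1 / 2}
        = (fun g : X → ℝ => g x₀) ⁻¹' Set.Ioi (1 / 2) ∩
          (fun g : X → ℝ => g x₁) ⁻¹' Set.Iio (1 / 2) := by
      ext g; simp [Set.mem_Ioi, Set.mem_Iio]
    rw [this]
    exact ((isOpen_Ioi.preimage (continuous_apply x₀)).inter
      (isOpen_Iio.preimage (continuous_apply x₁)))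
  have hhU : h ∈ {g : X → ℝ | (1 : ℝ) / 2 < g x₀ ∧ g x₁ < 1 / 2} := by
    constructor
    · simp only [hh]; norm_num
    · simp only [hh, if_neg hne.symm]; norm_num
  obtain ⟨f, hfU, hfR⟩ := mem_closure_iff.mp hcl _ hUopen hhU
  obtain ⟨n, rfl⟩ := hfR
  obtain ⟨c, hcf⟩ := hsel n
  rw [hcf] at hfU
  exact absurd (hfU.1.trans hfU.2) (lt_irrefl _)

end Selectors
end

section
/- Let Φ = Ω or Φ = Γ and let X be an infinite Hausdorff topological space. The following are equivalent, where 0̄ denotes the constant zero function on X: (a) USC*_p(X) satisfies the selection principle S₁(Φ̃↑, 𝒮), i.e., S₁(Φ̃↑(USC*_p(X)), 𝒮(USC*_p(X))); (b) USC*_p(X) is sequentially separable and X is an S₁(Φ,Γ)-space; (c) USC*_p(X) is sequentially separable and satisfies S₁(Φ_h,Γ_h) for every h ∈ USC*_p(X); (d) USC*_p(X) is sequentially separable and satisfies both S₁(Γ_0̄,Γ_0̄) and S₁(Φ̃↑,Γ_h) for every h ∈ USC*_p(X). -/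
open Set Filter Topology

namespace Selectors

variable {X : Type*}

section Infra
variable {X : Type*} [TopologicalSpace X]

lemma const_mem_USCb (c : ℝ) : (fun _ : X => c) ∈ USCb X := by
  constructor
  · intro a
    by_cases h : c < a
    · convert isOpen_univ using 1; ext x; simpa using h
    · convert isOpen_empty using 1; ext x; simpa using h
  · exact ⟨|c|, fun x => le_rfl⟩

lemma zero_mem_USCb : (0 : X → ℝ) ∈ USCb X := by
  have := const_mem_USCb (X := X) 0
  simpa [Pi.zero_def] using this

lemma add_mem_USCb {f g : X → ℝ} (hf : f ∈ USCb X) (hg : g ∈ USCb X) : f + g ∈ USCb X := by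
  obtain ⟨hfo, Mf, hMf⟩ := hf
  obtain ⟨hgo, Mg, hMg⟩ := hg
  constructor
  · intro a
    have he : {x | (f + g) x < a} = ⋃ q : ℚ, ({x | f x < q} ∩ {x | g x < a - q}) := by
      ext x
      simp only [Set.mem_setOf_eq, Set.mem_iUnion, Set.mem_inter_iff, Pi.add_apply]
      constructor
      · intro h
        obtain ⟨q, hq1, hq2⟩ := exists_rat_btwn (show f x < a - g x by linarith)
        exact ⟨q, hq1, by linarith⟩
      · rintro ⟨q, h1, h2⟩; linarith
    rw [he]
    exact isOpen_iUnion fun q => (hfo q).inter (hgo _)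
  · exact ⟨Mf + Mg, fun x => by
      simp only [Pi.add_apply]
      exact (abs_add_le _ _).trans (add_le_add (hMf x) (hMg x))⟩

lemma indicator_const_mem_USCb {S : Set X} (hS : IsClosed S) {c : ℝ} (hc : 0 ≤ c) :
    S.indicator (fun _ => c) ∈ USCb X := by
  constructor
  · intro a
    rcases le_or_gt a 0 with h | h
    · convert isOpen_empty using 1
      ext x
      simp only [Set.mem_setOf_eq, Set.mem_empty_iff_false, iff_false, not_lt]
      refine le_trans h ?_
      exact Set.indicator_nonneg (fun _ _ => hc) x
    · rcases lt_or_ge c a with h2 | h2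
      · convert isOpen_univ using 1
        ext x
        simp only [Set.mem_setOf_eq, Set.mem_univ, iff_true]
        by_cases hx : x ∈ S
        · simpa [Set.indicator_of_mem hx] using h2
        · simpa [Set.indicator_of_notMem hx] using h
      · have he : {x | S.indicator (fun _ => c) x < a} = Sᶜ := by
          ext x
          by_cases hx : x ∈ S
          · simp only [Set.indicator_of_mem hx, Set.mem_setOf_eq, Set.mem_compl_iff, hx,
              not_true_eq_false, iff_false, not_lt]
            exact h2
          · simp only [Set.indicator_of_notMem hx, Set.mem_setOf_eq, Set.mem_compl_iff, hx,
              not_false_eq_true, iff_true]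
            exact h
        rw [he]
        exact hS.isOpen_compl
  · refine ⟨c, fun x => ?_⟩
    by_cases hx : x ∈ S
    · simp [Set.indicator_of_mem hx, abs_of_nonneg hc]
    · simp [Set.indicator_of_notMem hx, hc]

lemma indicator_finite_mem_USCb [T1Space X] {A : Set X} (hA : A.Finite) {w : X → ℝ}
    (hw : ∀ x, 0 ≤ w x) : A.indicator w ∈ USCb X := by
  constructor
  · intro a
    rcases le_or_gt a 0 with h | h
    · convert isOpen_empty using 1
      ext x
      simp only [Set.mem_setOf_eq, Set.mem_empty_iff_false, iff_false, not_lt]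
      exact le_trans h (Set.indicator_nonneg (fun x _ => hw x) x)
    · have he : {x | A.indicator w x < a} = {x | x ∈ A ∧ a ≤ w x}ᶜ := by
        ext x
        by_cases hx : x ∈ A
        · simp only [Set.indicator_of_mem hx, Set.mem_setOf_eq, Set.mem_compl_iff, hx,
            true_and, not_le]
        · simp only [Set.indicator_of_notMem hx, Set.mem_setOf_eq, Set.mem_compl_iff, hx,
            false_and, not_false_eq_true, iff_true]
          exact h
      rw [he]
      exact (hA.subset (fun x hx => hx.1)).isClosed.isOpen_compl
  · obtain ⟨M, hM⟩ : ∃ M : ℝ, ∀ x ∈ A, w x ≤ M := by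
      rcases A.eq_empty_or_nonempty with rfl | hne
      · exact ⟨0, fun x hx => absurd hx (Set.notMem_empty x)⟩
      · obtain ⟨x0, hx0, hmax⟩ := hA.exists_maximalFor w A hne
        exact ⟨w x0, fun x hx => by
          by_contra hlt
          push_neg at hlt
          exact absurd (hmax hx hlt.le) (not_le.mpr hlt)⟩
    refine ⟨max M 0, fun x => ?_⟩
    by_cases hx : x ∈ A
    · rw [Set.indicator_of_mem hx, abs_of_nonneg (hw x)]
      exact le_max_of_le_left (hM x hx)
    · simp [Set.indicator_of_notMem hx]

set_option linter.unusedSectionVars false in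
lemma mem_closure_pi_iff {F : Set (X → ℝ)} {h : X → ℝ} :
    h ∈ closure F ↔ ∀ (A : Finset X) (ε : ℝ), 0 < ε → ∃ f ∈ F, ∀ a ∈ A, |f a - h a| < ε := by
  constructor
  · intro hc A ε hε
    have hO : IsOpen ((A : Set X).pi (fun a => Metric.ball (h a) ε)) :=
      isOpen_set_pi A.finite_toSet (fun a _ => Metric.isOpen_ball)
    obtain ⟨f, hfO, hfF⟩ := mem_closure_iff.mp hc _ hO
      (fun a _ => Metric.mem_ball_self hε)
    refine ⟨f, hfF, fun a ha => ?_⟩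
    have := hfO a (by simpa using ha)
    rwa [Metric.mem_ball, Real.dist_eq] at this
  · intro H
    rw [mem_closure_iff]
    intro o ho hho
    obtain ⟨I, u, hu, hsub⟩ := isOpen_pi_iff.mp ho h hho
    have hex : ∀ a : X, ∃ ε : ℝ, 0 < ε ∧ (a ∈ I → Metric.ball (h a) ε ⊆ u a) := by
      intro a
      by_cases ha : a ∈ I
      · obtain ⟨ε, hε, hb⟩ := Metric.isOpen_iff.mp (hu a ha).1 _ (hu a ha).2
        exact ⟨ε, hε, fun _ => hb⟩
      · exact ⟨1, one_pos, fun h' => absurd h' ha⟩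
    choose ε hε hball using hex
    rcases I.eq_empty_or_nonempty with rfl | hI
    · obtain ⟨f, hfF, _⟩ := H ∅ 1 one_pos
      exact ⟨f, hsub (by simp), hfF⟩
    · obtain ⟨a0, ha0, hmin⟩ := I.exists_min_image ε hI
      obtain ⟨f, hfF, hf⟩ := H I (ε a0) (hε a0)
      refine ⟨f, hsub (fun a ha => ?_), hfF⟩
      apply hball a ha
      rw [Metric.mem_ball, Real.dist_eq]
      exact lt_of_lt_of_le (hf a ha) (hmin a ha)

lemma finite_bad_of_tendsto {u : ℕ → ℝ} {l : ℝ} (h : Filter.Tendsto u Filter.atTop (nhds l))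
    {ε : ℝ} (hε : 0 < ε) : {k | ε ≤ |u k - l|}.Finite := by
  obtain ⟨N, hN⟩ := Metric.tendsto_atTop.mp h ε hε
  apply Set.Finite.subset (Set.finite_Iio N)
  intro k hk
  simp only [Set.mem_setOf_eq] at hk
  simp only [Set.mem_Iio]
  by_contra hk'
  have := hN k (le_of_not_gt hk')
  rw [Real.dist_eq] at this
  linarith

lemma exists_infinite_fiber_of_range_finite {β : Type*} {f : ℕ → β}
    (h : (Set.range f).Finite) : ∃ b, {n | f n = b}.Infinite := by
  by_contra hc
  push_neg at hc
  have he : (Set.univ : Set ℕ) = ⋃ b ∈ Set.range f, {n | f n = b} := by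
    ext n
    simp only [Set.mem_univ, Set.mem_iUnion, Set.mem_setOf_eq, true_iff]
    exact ⟨f n, ⟨n, rfl⟩, rfl⟩
  have hfin := h.biUnion (fun b _ => hc b)
  rw [← he] at hfin
  exact Set.infinite_univ hfin

lemma finite_eps {ε : ℝ} (hε : 0 < ε) : {n : ℕ | ε < 1/((n:ℝ)+1)}.Finite := by
  obtain ⟨N, hN⟩ := exists_nat_gt (1/ε)
  apply Set.Finite.subset (Set.finite_Iio N)
  intro n hn
  simp only [Set.mem_setOf_eq] at hn
  simp only [Set.mem_Iio]
  by_contra hcon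
  push_neg at hcon
  have h2 : (N:ℝ) ≤ n := Nat.cast_le.mpr hcon
  rw [div_lt_iff₀ hε] at hN
  rw [lt_div_iff₀ (by positivity)] at hn
  nlinarith

end Infra
section Select
variable {X : Type*} [TopologicalSpace X]

/-- Pick fresh elements: after `t` steps we have a list of `t` distinct elements,
the `t`-th being from `A (Nat.unpair t).1`. -/
noncomputable def pickList {β : Type*} (A : ℕ → Set β) (hA : ∀ n, (A n).Infinite) :
    ℕ → List β
  | 0 => []
  | (t+1) => pickList A hA t ++
      [((hA (Nat.unpair t).1).diff (pickList A hA t).finite_toSet).nonempty.some]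

noncomputable def pick {β : Type*} (A : ℕ → Set β) (hA : ∀ n, (A n).Infinite) (t : ℕ) : β :=
  ((hA (Nat.unpair t).1).diff (pickList A hA t).finite_toSet).nonempty.some

lemma pickList_succ {β : Type*} (A : ℕ → Set β) (hA : ∀ n, (A n).Infinite) (t : ℕ) :
    pickList A hA (t+1) = pickList A hA t ++ [pick A hA t] := rfl

lemma pick_spec {β : Type*} (A : ℕ → Set β) (hA : ∀ n, (A n).Infinite) (t : ℕ) :
    pick A hA t ∈ A (Nat.unpair t).1 ∧ pick A hA t ∉ {x | x ∈ pickList A hA t} :=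
  ((hA (Nat.unpair t).1).diff (pickList A hA t).finite_toSet).nonempty.some_mem

lemma pick_mem_pickList {β : Type*} (A : ℕ → Set β) (hA : ∀ n, (A n).Infinite) {s t : ℕ}
    (hst : s < t) : pick A hA s ∈ pickList A hA t := by
  induction t with
  | zero => omega
  | succ t ih =>
    rw [pickList_succ]
    rcases Nat.lt_succ_iff_lt_or_eq.mp hst with h | h
    · exact List.mem_append_left _ (ih h)
    · subst h; exact List.mem_append_right _ (List.mem_singleton_self _)

lemma pick_injective {β : Type*} (A : ℕ → Set β) (hA : ∀ n, (A n).Infinite) :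
    Function.Injective (pick A hA) := by
  intro s t hst
  by_contra hne
  rcases Nat.lt_or_ge s t with h | h
  · exact (pick_spec A hA t).2 (by rw [← hst]; exact pick_mem_pickList A hA h)
  · have h' : t < s := lt_of_le_of_ne h (Ne.symm hne)
    exact (pick_spec A hA s).2 (by rw [hst]; exact pick_mem_pickList A hA h')

/-- An infinite subfamily of an (open) γ-cover is an (open) γ-cover. -/
lemma gamma_mono {𝒰 𝒱 : Set (Set X)} (h : 𝒰 ∈ OpenKindCovers X CoverKind.gamma)
    (hsub : 𝒱 ⊆ 𝒰) (hinf : 𝒱.Infinite) : 𝒱 ∈ OpenKindCovers X CoverKind.gamma := by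
  obtain ⟨hop, _hcov, _hinf0, hfin⟩ := h
  have hfin' : ∀ x : X, {U ∈ 𝒱 | x ∉ U}.Finite :=
    fun x => (hfin x).subset (fun U hU => ⟨hsub hU.1, hU.2⟩)
  refine ⟨fun U hU => hop U (hsub hU), ?_, hinf, hfin'⟩
  intro x
  obtain ⟨U, hU⟩ := (hinf.diff (hfin' x)).nonempty
  refine ⟨U, hU.1, ?_⟩
  by_contra hx
  exact hU.2 ⟨hU.1, hx⟩

/-- A γ-cover not containing `univ` is an ω-cover. -/
lemma gamma_is_omega {𝒰 : Set (Set X)} (h : 𝒰 ∈ OpenKindCovers X CoverKind.gamma)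
    (huniv : Set.univ ∉ 𝒰) : 𝒰 ∈ OpenKindCovers X CoverKind.omega := by
  obtain ⟨hop, hcov, hinf, hfin⟩ := h
  refine ⟨hop, hcov, huniv, ?_⟩
  intro F hF
  have hbad : {U ∈ 𝒰 | ¬ F ⊆ U}.Finite := by
    apply Set.Finite.subset (hF.biUnion (fun a (_ : a ∈ F) => hfin a))
    intro U hU
    obtain ⟨hU1, hU2⟩ := hU
    rw [Set.not_subset] at hU2
    obtain ⟨a, ha, haU⟩ := hU2
    exact Set.mem_biUnion ha ⟨hU1, haU⟩
  obtain ⟨U, hU⟩ := (hinf.diff hbad).nonempty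
  refine ⟨U, hU.1, ?_⟩
  by_contra hx
  exact hU.2 ⟨hU.1, hx⟩

/-- Key selection lemma (γ-version): from S₁(Γ,Γ) one can select one member from each
γ-cover so that every point is in all but finitely many selected sets (index version). -/
lemma gamma_disjoint_select
    (hS : S1 (OpenKindCovers X CoverKind.gamma) (OpenKindCovers X CoverKind.gamma))
    (𝒰 : ℕ → Set (Set X)) (h𝒰 : ∀ n, 𝒰 n ∈ OpenKindCovers X CoverKind.gamma) :
    ∃ U : ℕ → Set X, (∀ n, U n ∈ 𝒰 n) ∧ ∀ x, {n | x ∉ U n}.Finite := by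
  have hinf : ∀ n, (𝒰 n).Infinite := fun n => (h𝒰 n).2.2.1
  set p := pick 𝒰 hinf with hp
  set 𝒱 : ℕ → Set (Set X) := fun n => p '' {t | (Nat.unpair t).1 = n} with h𝒱
  have h𝒱sub : ∀ n, 𝒱 n ⊆ 𝒰 n := by
    rintro n _ ⟨t, ht, rfl⟩
    have := (pick_spec 𝒰 hinf t).1
    rwa [ht] at this
  have h𝒱inf : ∀ n, (𝒱 n).Infinite := by
    intro n
    have hfib : {t | (Nat.unpair t).1 = n}.Infinite := by
      have hinj : Function.Injective (fun k => Nat.pair n k) := by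
        intro a b hab
        have := congrArg Nat.unpair hab
        simpa only [Nat.unpair_pair, Prod.mk.injEq, true_and] using this
      exact Set.infinite_of_injective_forall_mem hinj (fun k => by simp [Nat.unpair_pair])
    exact hfib.image (Set.injOn_of_injective (pick_injective 𝒰 hinf))
  have h𝒱cov : ∀ n, 𝒱 n ∈ OpenKindCovers X CoverKind.gamma :=
    fun n => gamma_mono (h𝒰 n) (h𝒱sub n) (h𝒱inf n)
  obtain ⟨sel, hsel, hrng⟩ := hS 𝒱 h𝒱cov
  have hselinj : Function.Injective sel := by
    intro n m hnm
    obtain ⟨t1, ht1, he1⟩ := hsel n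
    obtain ⟨t2, ht2, he2⟩ := hsel m
    rw [← he1, ← he2] at hnm
    have := pick_injective 𝒰 hinf hnm
    rw [← ht1, ← ht2, this]
  refine ⟨sel, fun n => h𝒱sub n (hsel n), fun x => ?_⟩
  have hfin : {U ∈ Set.range sel | x ∉ U}.Finite := hrng.2.2.2 x
  have : {n | x ∉ sel n} ⊆ sel ⁻¹' {U ∈ Set.range sel | x ∉ U} := by
    intro n hn
    exact ⟨⟨n, rfl⟩, hn⟩
  exact Set.Finite.subset (hfin.preimage (Set.injOn_of_injective hselinj)) this

lemma omega_to_gamma_S1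
    (hS : S1 (OpenKindCovers X CoverKind.omega) (OpenKindCovers X CoverKind.gamma)) :
    S1 (OpenKindCovers X CoverKind.gamma) (OpenKindCovers X CoverKind.gamma) := by
  intro u hu
  have h' : ∀ n, u n \ {Set.univ} ∈ OpenKindCovers X CoverKind.omega := by
    intro n
    apply gamma_is_omega
    · exact gamma_mono (hu n) Set.diff_subset ((hu n).2.2.1.diff (Set.finite_singleton _))
    · intro h
      exact h.2 rfl
  obtain ⟨sel, hsel, hrng⟩ := hS _ h'
  exact ⟨sel, fun n => (hsel n).1, hrng⟩

/-- Index-selection from ℕ-indexed families of open sets with the pointwise γ-property. -/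
lemma indexSelect_gamma
    (hS : S1 (OpenKindCovers X CoverKind.gamma) (OpenKindCovers X CoverKind.gamma))
    (O : ℕ → ℕ → Set X) (hop : ∀ n k, IsOpen (O n k))
    (hγ : ∀ n x, {k | x ∉ O n k}.Finite) :
    ∃ κ : ℕ → ℕ, ∀ x, {n | x ∉ O n (κ n)}.Finite := by
  classical
  set B := {n | ∀ k, O n k ≠ Set.univ} with hB
  have hcovers : ∀ n ∈ B, Set.range (O n) ∈ OpenKindCovers X CoverKind.gamma := by
    intro n hn
    have hfin : ∀ x : X, {U ∈ Set.range (O n) | x ∉ U}.Finite := by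
      intro x
      apply Set.Finite.subset ((hγ n x).image (O n))
      rintro _ ⟨⟨k, rfl⟩, hx⟩
      exact ⟨k, hx, rfl⟩
    have hinfr : (Set.range (O n)).Infinite := by
      by_contra hfl
      rw [Set.not_infinite] at hfl
      obtain ⟨W, hW⟩ := exists_infinite_fiber_of_range_finite hfl
      have hWuniv : W = Set.univ := by
        ext x
        simp only [Set.mem_univ, iff_true]
        obtain ⟨k, hk1, hk2⟩ := (hW.diff (hγ n x)).nonempty
        simp only [Set.mem_setOf_eq] at hk1 hk2
        rw [← hk1]
        by_contra hc
        exact hk2 hc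
      obtain ⟨k, hk⟩ := hW.nonempty
      exact hn k (hk.trans hWuniv)
    refine ⟨by rintro _ ⟨k, rfl⟩; exact hop n k, ?_, hinfr, hfin⟩
    intro x
    obtain ⟨k, hk⟩ := ((hγ n x).infinite_compl).nonempty
    exact ⟨O n k, ⟨k, rfl⟩, by simpa using hk⟩
  by_cases hBinf : B.Infinite
  · set e := Nat.nth (· ∈ B) with he
    have he_mem : ∀ i, e i ∈ B := fun i => Nat.nth_mem_of_infinite hBinf i
    have he_rng : Set.range e = B := Nat.range_nth_of_infinite hBinf
    obtain ⟨V, hV, hVfin⟩ := gamma_disjoint_select hS (fun i => Set.range (O (e i)))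
      (fun i => hcovers _ (he_mem i))
    have hkey : ∀ n, ∃ k, (n ∉ B ∧ O n k = Set.univ) ∨
        (∃ i, e i = n ∧ O n k = V i) := by
      intro n
      by_cases hn : n ∈ B
      · have : n ∈ Set.range e := by rw [he_rng]; exact hn
        obtain ⟨i, hi⟩ := this
        obtain ⟨k, hk⟩ : ∃ k, O n k = V i := by
          have := hV i
          rw [hi] at this
          exact this
        exact ⟨k, Or.inr ⟨i, hi, hk⟩⟩
      · simp only [hB, Set.mem_setOf_eq, not_forall, not_ne_iff] at hn
        obtain ⟨k, hk⟩ := hn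
        exact ⟨k, Or.inl ⟨by simp [hB]; exact ⟨k, hk⟩, hk⟩⟩
    choose κ hκspec using hkey
    refine ⟨κ, fun x => ?_⟩
    have hsub : {n | x ∉ O n (κ n)} ⊆ e '' {i | x ∉ V i} := by
      intro n hn
      simp only [Set.mem_setOf_eq] at hn
      rcases hκspec n with ⟨_, huniv⟩ | ⟨i, hi, hk⟩
      · exact absurd (huniv ▸ Set.mem_univ x) hn
      · exact ⟨i, by rw [Set.mem_setOf_eq, ← hk]; exact hn, hi⟩
    exact Set.Finite.subset ((hVfin x).image e) hsub
  · rw [Set.not_infinite] at hBinf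
    have hkey : ∀ n, ∃ k, n ∈ B ∨ O n k = Set.univ := by
      intro n
      by_cases hn : n ∈ B
      · exact ⟨0, Or.inl hn⟩
      · simp only [hB, Set.mem_setOf_eq, not_forall, not_ne_iff] at hn
        obtain ⟨k, hk⟩ := hn
        exact ⟨k, Or.inr hk⟩
    choose κ hκspec using hkey
    refine ⟨κ, fun x => ?_⟩
    apply hBinf.subset
    intro n hn
    simp only [Set.mem_setOf_eq] at hn
    rcases hκspec n with h | h
    · exact h
    · exact absurd (h ▸ Set.mem_univ x) hn

/-- Index-selection from ω-style families. -/
lemma indexSelect_omega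
    (hS : S1 (OpenKindCovers X CoverKind.omega) (OpenKindCovers X CoverKind.gamma))
    (𝒰 : ℕ → Set (Set X)) (hop : ∀ n, ∀ U ∈ 𝒰 n, IsOpen U)
    (hω : ∀ n (A : Set X), A.Finite → ∃ U ∈ 𝒰 n, A ⊆ U) :
    ∃ U : ℕ → Set X, (∀ n, U n ∈ 𝒰 n) ∧ ∀ x, {n | x ∉ U n}.Finite := by
  classical
  set B := {n | Set.univ ∉ 𝒰 n} with hB
  have hcovers : ∀ n ∈ B, 𝒰 n ∈ OpenKindCovers X CoverKind.omega := by
    intro n hn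
    refine ⟨hop n, ?_, hn, fun F hF => hω n F hF⟩
    intro x
    obtain ⟨U, hU, hxU⟩ := hω n {x} (Set.finite_singleton x)
    exact ⟨U, hU, hxU rfl⟩
  have hγγ := omega_to_gamma_S1 hS
  have hsubcov : ∀ n ∈ B, ∃ 𝒲, 𝒲 ⊆ 𝒰 n ∧ 𝒲 ∈ OpenKindCovers X CoverKind.gamma := by
    intro n hn
    obtain ⟨sel, hsel, hrng⟩ := hS (fun _ => 𝒰 n) (fun _ => hcovers n hn)
    exact ⟨Set.range sel, by rintro _ ⟨k, rfl⟩; exact hsel k, hrng⟩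
  by_cases hBinf : B.Infinite
  · set e := Nat.nth (· ∈ B) with he
    have he_mem : ∀ i, e i ∈ B := fun i => Nat.nth_mem_of_infinite hBinf i
    have he_rng : Set.range e = B := Nat.range_nth_of_infinite hBinf
    choose 𝒲 h𝒲sub h𝒲cov using fun i => hsubcov (e i) (he_mem i)
    obtain ⟨V, hV, hVfin⟩ := gamma_disjoint_select hγγ 𝒲 h𝒲cov
    have hkey : ∀ n, ∃ U, U ∈ 𝒰 n ∧ (U = Set.univ ∨ ∃ i, e i = n ∧ U = V i) := by
      intro n
      by_cases hn : n ∈ B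
      · have : n ∈ Set.range e := by rw [he_rng]; exact hn
        obtain ⟨i, hi⟩ := this
        refine ⟨V i, ?_, Or.inr ⟨i, hi, rfl⟩⟩
        have := h𝒲sub i (hV i)
        rwa [hi] at this
      · simp only [hB, Set.mem_setOf_eq, not_not] at hn
        exact ⟨Set.univ, hn, Or.inl rfl⟩
    choose U hU1 hU2 using hkey
    refine ⟨U, hU1, fun x => ?_⟩
    have hsub : {n | x ∉ U n} ⊆ e '' {i | x ∉ V i} := by
      intro n hn
      simp only [Set.mem_setOf_eq] at hn
      rcases hU2 n with h | ⟨i, hi, hVi⟩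
      · exact absurd (h ▸ Set.mem_univ x) hn
      · exact ⟨i, by rw [Set.mem_setOf_eq, ← hVi]; exact hn, hi⟩
    exact Set.Finite.subset ((hVfin x).image e) hsub
  · rw [Set.not_infinite] at hBinf
    have hkey : ∀ n, ∃ U, U ∈ 𝒰 n ∧ (n ∈ B ∨ U = Set.univ) := by
      intro n
      by_cases hn : n ∈ B
      · obtain ⟨U, hU, _⟩ := hω n ∅ Set.finite_empty
        exact ⟨U, hU, Or.inl hn⟩
      · simp only [hB, Set.mem_setOf_eq, not_not] at hn
        exact ⟨Set.univ, hn, Or.inr rfl⟩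
    choose U hU1 hU2 using hkey
    refine ⟨U, hU1, fun x => ?_⟩
    apply hBinf.subset
    intro n hn
    simp only [Set.mem_setOf_eq] at hn
    rcases hU2 n with h | h
    · exact h
    · exact absurd (h ▸ Set.mem_univ x) hn

end Select
section Consumers
variable {X : Type*} [TopologicalSpace X]

set_option linter.unusedSectionVars false in
lemma propGamma_of_sel {h : X → ℝ} {sel : ℕ → X → ℝ} {b : ℕ → ℝ}
    (hbfin : ∀ ε : ℝ, 0 < ε → {n | ε < b n}.Finite)
    (hge : ∀ n, h ≤ sel n)
    (hbd : ∀ x, {n | b n ≤ sel n x - h x}.Finite)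
    (hne : ∀ n, sel n ≠ h) :
    PropGamma h (Set.range sel) := by
  constructor
  · by_contra hfin
    rw [Set.not_infinite] at hfin
    obtain ⟨f, hf⟩ := exists_infinite_fiber_of_range_finite hfin
    have hfh : f = h := by
      funext x
      have hge' : h x ≤ f x := by
        obtain ⟨n, hn⟩ := hf.nonempty
        rw [Set.mem_setOf_eq] at hn
        rw [← hn]; exact hge n x
      by_contra hne'
      have hlt : 0 < f x - h x := sub_pos.mpr (lt_of_le_of_ne hge' (Ne.symm hne'))
      have hsub : {n | sel n = f} ⊆
          {n | b n ≤ sel n x - h x} ∪ {n | (f x - h x) < b n} := by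
        intro n hn
        rw [Set.mem_setOf_eq] at hn
        rcases le_or_gt (b n) (sel n x - h x) with hc | hc
        · exact Or.inl hc
        · right; rw [Set.mem_setOf_eq]; rw [hn] at hc; exact hc
      exact hf (Set.Finite.subset ((hbd x).union (hbfin _ hlt)) hsub)
    obtain ⟨n, hn⟩ := hf.nonempty
    rw [Set.mem_setOf_eq] at hn
    exact hne n (by rw [hn, hfh])
  · intro ε hε x
    have hsub : {f ∈ Set.range sel | ε ≤ |f x - h x|} ⊆
        sel '' ({n | b n ≤ sel n x - h x} ∪ {n | ε < b n}) := by
      rintro f ⟨⟨n, rfl⟩, hfx⟩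
      have habs : |sel n x - h x| = sel n x - h x :=
        abs_of_nonneg (by linarith [hge n x])
      rw [habs] at hfx
      rcases le_or_gt (b n) (sel n x - h x) with hc | hc
      · exact ⟨n, Or.inl hc, rfl⟩
      · exact ⟨n, Or.inr (by rw [Set.mem_setOf_eq]; linarith), rfl⟩
    exact Set.Finite.subset (((hbd x).union (hbfin ε hε)).image sel) hsub

lemma upperSelect_omega [Nonempty X]
    (hS : S1 (OpenKindCovers X CoverKind.omega) (OpenKindCovers X CoverKind.gamma))
    (S : ℕ → Set (X → ℝ)) (hSd : ∀ n, UpperDenseIn (S n) (USCb X))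
    (t : ℕ → X → ℝ) (ht : ∀ n, t n ∈ USCb X) :
    ∃ sel : ℕ → X → ℝ,
      (∀ n, sel n ∈ S n ∧ t n ≤ sel n ∧ sel n - t n ∈ USCb X ∧ sel n ≠ t n) ∧
      ∀ x, {n : ℕ | 1/((n:ℝ)+1) ≤ sel n x - t n x}.Finite := by
  classical
  set I : ℕ → Set (X → ℝ) :=
    fun n => {g | g ∈ S n ∧ t n ≤ g ∧ g - t n ∈ USCb X ∧ g ≠ t n} with hI
  set 𝒰 : ℕ → Set (Set X) :=
    fun n => {V | ∃ g ∈ I n, V = {x | g x - t n x < 1/((n:ℝ)+1)}} with h𝒰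
  have hop : ∀ n, ∀ U ∈ 𝒰 n, IsOpen U := by
    rintro n _ ⟨g, hg, rfl⟩
    exact hg.2.2.1.1 (1/((n:ℝ)+1))
  have hω : ∀ n (A : Set X), A.Finite → ∃ U ∈ 𝒰 n, A ⊆ U := by
    intro n A hA
    obtain ⟨x₀⟩ := (inferInstance : Nonempty X)
    set A' : Set X := insert x₀ A with hA'
    have hA'f : A'.Finite := hA.insert x₀
    set c := 1/(2*((n:ℝ)+1)) with hc'
    have hc : 0 < c := by positivity
    have hw : (t n + fun _ => c) ∈ USCb X := add_mem_USCb (ht n) (const_mem_USCb c)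
    have hwge : t n ≤ t n + fun _ => c := by
      intro x; simp only [Pi.add_apply]; linarith
    have hcl := (hSd n).2 (t n) (ht n) ⟨hw, hwge⟩
    rw [mem_closure_pi_iff] at hcl
    obtain ⟨g, hg, hgA⟩ := hcl hA'f.toFinset c hc
    have hval : ∀ a ∈ A', 0 < g a - t n a ∧ g a - t n a < 1/((n:ℝ)+1) := by
      intro a ha
      have := hgA a (hA'f.mem_toFinset.mpr ha)
      simp only [Pi.add_apply] at this
      rw [abs_lt] at this
      have hn1 : ((n:ℝ)+1) ≠ 0 := by positivity
      have h2c : 2*c = 1/((n:ℝ)+1) := by rw [hc']; field_simp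
      constructor
      · linarith
      · linarith
    have hgne : g ≠ t n := by
      intro he
      have := (hval x₀ (Set.mem_insert _ _)).1
      rw [he] at this
      simp at this
    refine ⟨{x | g x - t n x < 1/((n:ℝ)+1)}, ⟨g, ⟨hg.1, hg.2.1, hg.2.2, hgne⟩, rfl⟩, ?_⟩
    intro a ha
    exact (hval a (Set.mem_insert_of_mem _ ha)).2
  obtain ⟨U, hU1, hU2⟩ := indexSelect_omega hS 𝒰 hop hω
  have hrep : ∀ n, ∃ g ∈ I n, U n = {x | g x - t n x < 1/((n:ℝ)+1)} := fun n => hU1 n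
  choose g hgI hgU using hrep
  refine ⟨g, fun n => ⟨(hgI n).1, (hgI n).2.1, (hgI n).2.2.1, (hgI n).2.2.2⟩, fun x => ?_⟩
  have : {n : ℕ | 1/((n:ℝ)+1) ≤ g n x - t n x} ⊆ {n | x ∉ U n} := by
    intro n hn
    rw [Set.mem_setOf_eq] at hn ⊢
    rw [hgU n]
    simp only [Set.mem_setOf_eq, not_lt]
    exact hn
  exact (hU2 x).subset this

lemma upperSelect_gamma
    (hS : S1 (OpenKindCovers X CoverKind.gamma) (OpenKindCovers X CoverKind.gamma))
    (S : ℕ → Set (X → ℝ)) (hSd : ∀ n, UpperSeqDenseIn (S n) (USCb X))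
    (t : ℕ → X → ℝ) (ht : ∀ n, t n ∈ USCb X) :
    ∃ sel : ℕ → X → ℝ,
      (∀ n, sel n ∈ S n ∧ t n ≤ sel n ∧ sel n - t n ∈ USCb X) ∧
      ∀ x, {n : ℕ | 1/((n:ℝ)+1) ≤ sel n x - t n x}.Finite := by
  have hseq := fun n => (hSd n).2 (t n) (ht n)
  choose u hu htend using hseq
  set O : ℕ → ℕ → Set X := fun n k => {x | u n k x - t n x < 1/((n:ℝ)+1)} with hO
  have hop : ∀ n k, IsOpen (O n k) := fun n k => (hu n k).2.2.1 (1/((n:ℝ)+1))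
  have hγ : ∀ n x, {k | x ∉ O n k}.Finite := by
    intro n x
    have htx : Filter.Tendsto (fun k => u n k x) Filter.atTop (nhds (t n x)) :=
      tendsto_pi_nhds.mp (htend n) x
    apply (finite_bad_of_tendsto htx (by positivity : (0:ℝ) < 1/((n:ℝ)+1))).subset
    intro k hk
    simp only [hO, Set.mem_setOf_eq, not_lt] at hk
    rw [Set.mem_setOf_eq]
    have hge : t n x ≤ u n k x := (hu n k).2.1 x
    rw [abs_of_nonneg (by linarith)]
    exact hk
  obtain ⟨κ, hκ⟩ := indexSelect_gamma hS O hop hγ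
  refine ⟨fun n => u n (κ n), fun n => ⟨(hu n (κ n)).1, (hu n (κ n)).2.1, (hu n (κ n)).2.2⟩,
    fun x => ?_⟩
  apply (hκ x).subset
  intro n hn
  rw [Set.mem_setOf_eq] at hn ⊢
  simp only [hO, Set.mem_setOf_eq, not_lt]
  exact hn

/-- Core selection: from `S₁(Φ(X),Γ(X))` we get `S₁(Φ_h, Γ_h)` for the function space. -/
lemma core_select (k : CoverKind)
    (hS : S1 (OpenKindCovers X k) (OpenKindCovers X CoverKind.gamma))
    (hk : k = CoverKind.omega ∨ k = CoverKind.gamma)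
    {h : X → ℝ}
    (F : ℕ → Set (X → ℝ)) (hF : ∀ n, F n ∈ PhiH k h (USCb X)) :
    ∃ sel : ℕ → (X → ℝ), (∀ n, sel n ∈ F n) ∧
      Set.range sel ∈ PhiH CoverKind.gamma h (USCb X) := by
  classical
  have hbfin : ∀ ε : ℝ, 0 < ε → {n : ℕ | ε < 1/((n:ℝ)+1)}.Finite := fun ε hε => finite_eps hε
  rcases hk with rfl | rfl
  · -- ω-case
    set 𝒰 : ℕ → Set (Set X) :=
      fun n => {V | ∃ f ∈ F n, V = {x | f x - h x < 1/((n:ℝ)+1)}} with h𝒰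
    have hop : ∀ n, ∀ U ∈ 𝒰 n, IsOpen U := by
      rintro n _ ⟨f, hf, rfl⟩
      exact ((hF n).2.2 f hf).2.1 (1/((n:ℝ)+1))
    have hω : ∀ n (A : Set X), A.Finite → ∃ U ∈ 𝒰 n, A ⊆ U := by
      intro n A hA
      have hcl : h ∈ closure (F n) := (hF n).2.1.2
      rw [mem_closure_pi_iff] at hcl
      obtain ⟨f, hf, hfA⟩ := hcl hA.toFinset (1/((n:ℝ)+1)) (by positivity)
      refine ⟨_, ⟨f, hf, rfl⟩, ?_⟩
      intro a ha
      have := hfA a (hA.mem_toFinset.mpr ha)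
      rw [Set.mem_setOf_eq]
      rw [abs_lt] at this
      linarith [this.2]
    obtain ⟨U, hU1, hU2⟩ := indexSelect_omega hS 𝒰 hop hω
    have hrep : ∀ n, ∃ f ∈ F n, U n = {x | f x - h x < 1/((n:ℝ)+1)} := fun n => hU1 n
    choose f hfF hfU using hrep
    have hbd : ∀ x, {n : ℕ | 1/((n:ℝ)+1) ≤ f n x - h x}.Finite := by
      intro x
      apply (hU2 x).subset
      intro n hn
      rw [Set.mem_setOf_eq] at hn ⊢
      rw [hfU n]
      simp only [Set.mem_setOf_eq, not_lt]
      exact hn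
    have hne : ∀ n, f n ≠ h := by
      intro n he
      exact (hF n).2.1.1 (he ▸ hfF n)
    refine ⟨f, hfF, ?_, ?_, ?_⟩
    · rintro _ ⟨n, rfl⟩
      exact (hF n).1 (hfF n)
    · exact propGamma_of_sel hbfin (fun n => ((hF n).2.2 _ (hfF n)).1) hbd hne
    · rintro _ ⟨n, rfl⟩
      exact (hF n).2.2 _ (hfF n)
  · -- γ-case
    set G : ℕ → Set (X → ℝ) := fun n => F n \ {h} with hG
    have hGinf : ∀ n, (G n).Infinite := fun n =>
      (hF n).2.1.1.diff (Set.finite_singleton h)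
    set g : ℕ → ℕ → (X → ℝ) := fun n k => ((Set.Infinite.natEmbedding (G n) (hGinf n)) k).1 with hg
    have hgG : ∀ n k, g n k ∈ G n := fun n k => ((Set.Infinite.natEmbedding (G n) (hGinf n)) k).2
    have hginj : ∀ n, Function.Injective (g n) := by
      intro n a b hab
      exact (Set.Infinite.natEmbedding (G n) (hGinf n)).injective (Subtype.ext hab)
    set O : ℕ → ℕ → Set X := fun n k => {x | g n k x - h x < 1/((n:ℝ)+1)} with hO
    have hop : ∀ n k, IsOpen (O n k) :=
      fun n k => ((hF n).2.2 _ (hgG n k).1).2.1 (1/((n:ℝ)+1))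
    have hγ : ∀ n x, {k | x ∉ O n k}.Finite := by
      intro n x
      have hfin : {f ∈ F n | 1/((n:ℝ)+1) ≤ |f x - h x|}.Finite :=
        (hF n).2.1.2 (1/((n:ℝ)+1)) (by positivity) x
      apply (hfin.preimage (Set.injOn_of_injective (hginj n))).subset
      intro k hk
      simp only [hO, Set.mem_setOf_eq, not_lt] at hk
      refine ⟨(hgG n k).1, ?_⟩
      have hge : h x ≤ g n k x := ((hF n).2.2 _ (hgG n k).1).1 x
      rw [abs_of_nonneg (by linarith)]
      exact hk
    obtain ⟨κ, hκ⟩ := indexSelect_gamma hS O hop hγ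
    set sel : ℕ → (X → ℝ) := fun n => g n (κ n) with hsel
    have hbd : ∀ x, {n : ℕ | 1/((n:ℝ)+1) ≤ sel n x - h x}.Finite := by
      intro x
      apply (hκ x).subset
      intro n hn
      rw [Set.mem_setOf_eq] at hn ⊢
      simp only [hO, Set.mem_setOf_eq, not_lt]
      exact hn
    have hne : ∀ n, sel n ≠ h := fun n he => (hgG n (κ n)).2 (by simpa using he)
    refine ⟨sel, fun n => (hgG n (κ n)).1, ?_, ?_, ?_⟩
    · rintro _ ⟨n, rfl⟩
      exact (hF n).1 (hgG n (κ n)).1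
    · exact propGamma_of_sel hbfin (fun n => ((hF n).2.2 _ (hgG n (κ n)).1).1) hbd hne
    · rintro _ ⟨n, rfl⟩
      exact (hF n).2.2 _ (hgG n (κ n)).1
end Consumers
section TFam
variable {X : Type*} [TopologicalSpace X]

lemma eventually_not_mem_of_finite {s : Set ℕ} (hs : s.Finite) :
    ∀ᶠ k in Filter.atTop, k ∉ s := by
  obtain ⟨N, hN⟩ := hs.bddAbove
  rw [Filter.eventually_atTop]
  exact ⟨N+1, fun k hk hks => by have := hN hks; omega⟩

lemma abs_le_sups [Nonempty X] {g : X → ℝ} (hg : g ∈ USCb X) (y : X) :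
    |g y| ≤ ⨆ z, |g z| := by
  obtain ⟨M, hM⟩ := hg.2
  exact le_ciSup ⟨M, by rintro r ⟨z, rfl⟩; exact hM z⟩ y

lemma sups_nonneg [Nonempty X] {g : X → ℝ} (hg : g ∈ USCb X) :
    0 ≤ ⨆ z, |g z| :=
  (abs_nonneg _).trans (abs_le_sups hg (Classical.arbitrary X))

/-- The modified family `T(𝒰)` with jump `1 + 2 sup|g|`. -/
noncomputable def TF (𝒰 : Set (Set X)) : Set (X → ℝ) :=
  {e | ∃ U ∈ 𝒰, ∃ g ∈ USCb X, e = g + Uᶜ.indicator (fun _ => 1 + 2 * ⨆ z, |g z|)}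

lemma TF_subset [Nonempty X] {𝒰 : Set (Set X)} (hop : ∀ U ∈ 𝒰, IsOpen U) :
    TF 𝒰 ⊆ USCb X := by
  rintro _ ⟨U, hU, g, hg, rfl⟩
  exact add_mem_USCb hg (indicator_const_mem_USCb (hop U hU).isClosed_compl
    (by linarith [sups_nonneg hg]))

lemma TF_off [Nonempty X] {U : Set X} {g : X → ℝ} (hg : g ∈ USCb X)
    {x : X} (hx : x ∉ U) :
    1 ≤ (g + Uᶜ.indicator (fun _ => 1 + 2 * ⨆ z, |g z|)) x := by
  have h1 : Uᶜ.indicator (fun _ : X => 1 + 2 * ⨆ z, |g z|) x = 1 + 2 * ⨆ z, |g z| :=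
    Set.indicator_of_mem (show x ∈ Uᶜ from hx) _
  have h2 : |g x| ≤ ⨆ z, |g z| := abs_le_sups hg x
  have h3 : -(⨆ z, |g z|) ≤ g x := neg_le_of_abs_le h2
  simp only [Pi.add_apply, h1]
  linarith [sups_nonneg hg]

lemma zero_not_mem_TF [Nonempty X] {𝒰 : Set (Set X)} (huniv : Set.univ ∉ 𝒰) :
    (0 : X → ℝ) ∉ TF 𝒰 := by
  rintro ⟨U, hU, g, hg, heq⟩
  have hUne : U ≠ Set.univ := fun h => huniv (h ▸ hU)
  obtain ⟨x, hx⟩ := Set.ne_univ_iff_exists_notMem U |>.mp hUne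
  have := TF_off hg hx
  rw [← heq] at this
  simp at this
  linarith

lemma TF_upperDense [Nonempty X] [T1Space X] {𝒰 : Set (Set X)}
    (hop : ∀ U ∈ 𝒰, IsOpen U)
    (hω : ∀ A : Set X, A.Finite → ∃ U ∈ 𝒰, A ⊆ U) :
    UpperDenseIn (TF 𝒰) (USCb X) := by
  refine ⟨TF_subset hop, ?_⟩
  rintro f hf w ⟨hw, hfw⟩
  rw [mem_closure_pi_iff]
  intro A ε hε
  set d : X → ℝ := (A : Set X).indicator (fun x => w x - f x) with hd
  have hdH : d ∈ USCb X :=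
    indicator_finite_mem_USCb A.finite_toSet
      (fun x => sub_nonneg.mpr (hfw x))
  have hdnn : ∀ x, 0 ≤ d x :=
    fun x => Set.indicator_nonneg (fun y _ => sub_nonneg.mpr (hfw y)) x
  set g : X → ℝ := f + d with hgdef
  have hgH : g ∈ USCb X := add_mem_USCb hf hdH
  obtain ⟨U, hU, hAU⟩ := hω A A.finite_toSet
  set c : ℝ := 1 + 2 * ⨆ z, |g z| with hc
  have hcnn : 0 ≤ c := by linarith [sups_nonneg hgH]
  set e : X → ℝ := g + Uᶜ.indicator (fun _ => c) with he
  have heTF : e ∈ TF 𝒰 := ⟨U, hU, g, hgH, rfl⟩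
  have hindnn : ∀ x, 0 ≤ Uᶜ.indicator (fun _ : X => c) x :=
    fun x => Set.indicator_nonneg (fun _ _ => hcnn) x
  have hfe : f ≤ e := by
    intro x
    simp only [he, hgdef, Pi.add_apply]
    have := hdnn x
    have := hindnn x
    linarith
  have hefH : e - f ∈ USCb X := by
    have : e - f = d + Uᶜ.indicator (fun _ => c) := by
      funext x
      simp only [he, hgdef, Pi.sub_apply, Pi.add_apply]
      ring
    rw [this]
    exact add_mem_USCb hdH (indicator_const_mem_USCb (hop U hU).isClosed_compl hcnn)
  refine ⟨e, ⟨heTF, hfe, hefH⟩, ?_⟩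
  intro a ha
  have haU : a ∈ U := hAU ha
  have h1 : Uᶜ.indicator (fun _ : X => c) a = 0 :=
    Set.indicator_of_notMem (show a ∉ Uᶜ from fun hc' => hc' haU) _
  have h2 : d a = w a - f a := Set.indicator_of_mem (show a ∈ (A : Set X) from ha) _
  have hew : e a = w a := by
    simp only [he, hgdef, Pi.add_apply]
    rw [h1, h2]
    ring
  rw [hew]
  simpa using hε

lemma TF_upperSeqDense [Nonempty X] {𝒰 : Set (Set X)}
    (h𝒰 : 𝒰 ∈ OpenKindCovers X CoverKind.gamma) :
    UpperSeqDenseIn (TF 𝒰) (USCb X) := by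
  obtain ⟨hop, hcov, hinf, hfin⟩ := h𝒰
  refine ⟨TF_subset hop, ?_⟩
  intro f hf
  set V : ℕ → Set X := fun k => (Set.Infinite.natEmbedding 𝒰 hinf k).1 with hV
  have hV𝒰 : ∀ k, V k ∈ 𝒰 := fun k => (Set.Infinite.natEmbedding 𝒰 hinf k).2
  have hVinj : Function.Injective V := fun a b hab =>
    (Set.Infinite.natEmbedding 𝒰 hinf).injective (Subtype.ext hab)
  set c : ℝ := 1 + 2 * ⨆ z, |f z| with hc
  have hcnn : 0 ≤ c := by linarith [sups_nonneg hf]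
  set u : ℕ → (X → ℝ) := fun k => f + (V k)ᶜ.indicator (fun _ => c) with hu
  have huTF : ∀ k, u k ∈ TF 𝒰 := fun k => ⟨V k, hV𝒰 k, f, hf, rfl⟩
  have hindnn : ∀ k x, 0 ≤ (V k)ᶜ.indicator (fun _ : X => c) x :=
    fun k x => Set.indicator_nonneg (fun _ _ => hcnn) x
  have hfu : ∀ k, f ≤ u k := by
    intro k x
    simp only [hu, Pi.add_apply]
    linarith [hindnn k x]
  have hufH : ∀ k, u k - f ∈ USCb X := by
    intro k
    have : u k - f = (V k)ᶜ.indicator (fun _ => c) := by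
      funext x; simp only [hu, Pi.sub_apply, Pi.add_apply]; ring
    rw [this]
    exact indicator_const_mem_USCb (hop _ (hV𝒰 k)).isClosed_compl hcnn
  refine ⟨u, fun k => ⟨huTF k, hfu k, hufH k⟩, ?_⟩
  rw [tendsto_pi_nhds]
  intro x
  have hbad : {k | x ∉ V k}.Finite := by
    apply ((hfin x).preimage (Set.injOn_of_injective hVinj)).subset
    intro k hk
    exact ⟨hV𝒰 k, hk⟩
  apply Filter.Tendsto.congr' _
    (tendsto_const_nhds : Filter.Tendsto (fun _ : ℕ => f x) Filter.atTop (nhds (f x)))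
  filter_upwards [eventually_not_mem_of_finite hbad] with k hk
  have hxV : x ∈ V k := by simpa using hk
  simp only [hu, Pi.add_apply]
  rw [Set.indicator_of_notMem (by simpa using hxV)]
  ring

end TFam
section PD
variable {X : Type*} [TopologicalSpace X]

/-- Partial diagonalization property for covers of kind `k`. -/
def PDprop (X : Type*) [TopologicalSpace X] (k : CoverKind) : Prop :=
  ∀ 𝒱 : ℕ → Set (Set X), (∀ n, 𝒱 n ∈ OpenKindCovers X k) → (∀ n, Set.univ ∉ 𝒱 n) →
    ∃ A : Set ℕ, A.Infinite ∧ ∃ W : ℕ → Set X,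
      (∀ n ∈ A, W n ∈ 𝒱 n) ∧ ∀ x : X, {n | n ∈ A ∧ x ∉ W n}.Finite

lemma final_gamma_cover {sel : ℕ → Set X}
    (hop : ∀ m, IsOpen (sel m)) (hne : ∀ m, sel m ≠ Set.univ)
    (hfin : ∀ x, {m | x ∉ sel m}.Finite) :
    Set.range sel ∈ OpenKindCovers X CoverKind.gamma := by
  have hinf : (Set.range sel).Infinite := by
    by_contra hf
    rw [Set.not_infinite] at hf
    obtain ⟨U₀, hU₀⟩ := exists_infinite_fiber_of_range_finite hf
    have hU₀univ : U₀ = Set.univ := by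
      ext x
      simp only [Set.mem_univ, iff_true]
      obtain ⟨m, hm1, hm2⟩ := (hU₀.diff (hfin x)).nonempty
      rw [Set.mem_setOf_eq] at hm1
      simp only [Set.mem_setOf_eq] at hm2
      rw [← hm1]
      exact not_not.mp hm2
    obtain ⟨m, hm⟩ := hU₀.nonempty
    rw [Set.mem_setOf_eq] at hm
    exact hne m (hm.trans hU₀univ)
  have hmiss : ∀ x : X, {U ∈ Set.range sel | x ∉ U}.Finite := by
    intro x
    apply ((hfin x).image sel).subset
    rintro _ ⟨⟨m, rfl⟩, hx⟩
    exact ⟨m, hx, rfl⟩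
  refine ⟨by rintro _ ⟨m, rfl⟩; exact hop m, ?_, hinf, hmiss⟩
  intro x
  obtain ⟨U, hU1, hU2⟩ := (hinf.diff (hmiss x)).nonempty
  exact ⟨U, hU1, not_not.mp (fun hx => hU2 ⟨hU1, hx⟩)⟩

lemma PD_to_S1_gamma (hPD : PDprop X CoverKind.gamma) :
    S1 (OpenKindCovers X CoverKind.gamma) (OpenKindCovers X CoverKind.gamma) := by
  intro 𝒰 h𝒰
  classical
  set 𝒰' : ℕ → Set (Set X) := fun n => 𝒰 n \ {Set.univ} with h𝒰'
  have h𝒰'γ : ∀ n, 𝒰' n ∈ OpenKindCovers X CoverKind.gamma := fun n =>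
    gamma_mono (h𝒰 n) Set.diff_subset ((h𝒰 n).2.2.1.diff (Set.finite_singleton _))
  have h𝒰'inf : ∀ n, (𝒰' n).Infinite := fun n => (h𝒰'γ n).2.2.1
  set E : ℕ → ℕ → Set X :=
    fun n k => (Set.Infinite.natEmbedding (𝒰' n) (h𝒰'inf n) k).1 with hE
  have hE𝒰 : ∀ n k, E n k ∈ 𝒰' n :=
    fun n k => (Set.Infinite.natEmbedding _ (h𝒰'inf n) k).2
  have hEinj : ∀ n, Function.Injective (E n) := fun n a b hab =>
    (Set.Infinite.natEmbedding _ (h𝒰'inf n)).injective (Subtype.ext hab)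
  set V : ℕ → ℕ → Set X := fun n k => ⋂ i ∈ Finset.range (n+1), E i k with hV
  have hVsub : ∀ n k i, i ≤ n → V n k ⊆ E i k := fun n k i hi =>
    Set.biInter_subset_of_mem (Finset.mem_range.mpr (by omega))
  have hVne : ∀ n k, V n k ≠ Set.univ := by
    intro n k hVu
    have h0 : E 0 k = Set.univ :=
      Set.eq_univ_of_univ_subset (hVu ▸ hVsub n k 0 (by omega))
    exact (hE𝒰 0 k).2 (by simp [h0])
  have hVbad : ∀ n x, {k | x ∉ V n k}.Finite := by
    intro n x
    have hsub : {k | x ∉ V n k} ⊆ ⋃ i ∈ Finset.range (n+1), {k | x ∉ E i k} := by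
      intro k hk
      rw [Set.mem_setOf_eq, hV] at hk
      simp only [Set.mem_iInter, not_forall] at hk
      obtain ⟨i, hi, hxE⟩ := hk
      exact Set.mem_biUnion hi hxE
    apply Set.Finite.subset _ hsub
    apply Set.Finite.biUnion (Finset.range (n+1)).finite_toSet
    intro i _
    apply (((h𝒰 i).2.2.2 x).preimage (Set.injOn_of_injective (hEinj i))).subset
    intro k hk
    exact ⟨(hE𝒰 i k).1, hk⟩
  have h𝒱γ : ∀ n, Set.range (V n) ∈ OpenKindCovers X CoverKind.gamma := by
    intro n
    have hop : ∀ U ∈ Set.range (V n), IsOpen U := by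
      rintro _ ⟨k, rfl⟩
      exact isOpen_biInter_finset (fun i _ => (h𝒰 i).1 _ (hE𝒰 i k).1)
    have hmiss : ∀ x : X, {U ∈ Set.range (V n) | x ∉ U}.Finite := by
      intro x
      apply ((hVbad n x).image (V n)).subset
      rintro _ ⟨⟨k, rfl⟩, hx⟩
      exact ⟨k, hx, rfl⟩
    have hinf : (Set.range (V n)).Infinite := by
      by_contra hf
      rw [Set.not_infinite] at hf
      obtain ⟨W₀, hW₀⟩ := exists_infinite_fiber_of_range_finite hf
      have : W₀ = Set.univ := by
        ext x
        simp only [Set.mem_univ, iff_true]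
        obtain ⟨k, hk1, hk2⟩ := (hW₀.diff (hVbad n x)).nonempty
        rw [Set.mem_setOf_eq] at hk1
        simp only [Set.mem_setOf_eq] at hk2
        rw [← hk1]
        exact not_not.mp hk2
      obtain ⟨k, hk⟩ := hW₀.nonempty
      rw [Set.mem_setOf_eq] at hk
      exact hVne n k (hk.trans this)
    refine ⟨hop, ?_, hinf, hmiss⟩
    intro x
    obtain ⟨U, hU1, hU2⟩ := (hinf.diff (hmiss x)).nonempty
    exact ⟨U, hU1, not_not.mp (fun hx => hU2 ⟨hU1, hx⟩)⟩
  have h𝒱ne : ∀ n, Set.univ ∉ Set.range (V n) := by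
    rintro n ⟨k, hk⟩
    exact hVne n k hk
  obtain ⟨A, hAinf, W, hW, hWfin⟩ := hPD (fun n => Set.range (V n)) h𝒱γ h𝒱ne
  have hgt : ∀ m : ℕ, ∃ n ∈ A, m < n := fun m => hAinf.exists_gt m
  choose nm hnmA hnm using hgt
  have hrep : ∀ m, ∃ k, V (nm m) k = W (nm m) := fun m => hW (nm m) (hnmA m)
  choose kk hkk using hrep
  set sel : ℕ → Set X := fun m => E m (kk m) with hsel
  have hselmem : ∀ m, sel m ∈ 𝒰 m := fun m => (hE𝒰 m (kk m)).1
  have hselfin : ∀ x : X, {m | x ∉ sel m}.Finite := by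
    intro x
    have hsub : {m | x ∉ sel m} ⊆ ⋃ n ∈ {n | n ∈ A ∧ x ∉ W n}, {m | nm m = n} := by
      intro m hm
      rw [Set.mem_setOf_eq] at hm
      have hxV : x ∉ V (nm m) (kk m) :=
        fun hx => hm (hVsub (nm m) (kk m) m (le_of_lt (hnm m)) hx)
      rw [hkk m] at hxV
      exact Set.mem_biUnion ⟨hnmA m, hxV⟩ rfl
    apply Set.Finite.subset _ hsub
    apply (hWfin x).biUnion
    intro n _
    apply (Set.finite_Iio n).subset
    intro m hm
    rw [Set.mem_setOf_eq] at hm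
    rw [Set.mem_Iio, ← hm]
    exact hnm m
  refine ⟨sel, hselmem, ?_⟩
  refine final_gamma_cover (fun m => (h𝒰 m).1 _ (hselmem m)) ?_ hselfin
  intro m hm
  exact (hE𝒰 m (kk m)).2 (by rw [Set.mem_singleton_iff]; exact hm)

lemma PD_to_S1_omega (hPD : PDprop X CoverKind.omega) :
    S1 (OpenKindCovers X CoverKind.omega) (OpenKindCovers X CoverKind.gamma) := by
  intro 𝒰 h𝒰
  classical
  set 𝒱 : ℕ → Set (Set X) := fun n =>
    {W | ∃ s : ℕ → Set X, (∀ i ≤ n, s i ∈ 𝒰 i) ∧ W = ⋂ i ∈ Finset.range (n+1), s i} with h𝒱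
  have h𝒱ne : ∀ n, Set.univ ∉ 𝒱 n := by
    rintro n ⟨s, hs, hWeq⟩
    have hs0 : s 0 = Set.univ := by
      apply Set.eq_univ_of_univ_subset
      have h1 : (⋂ i ∈ Finset.range (n+1), s i) ⊆ s 0 :=
        Set.biInter_subset_of_mem (Finset.mem_range.mpr (by omega))
      rw [← hWeq] at h1
      exact h1
    exact (h𝒰 0).2.2.1 (hs0 ▸ hs 0 (by omega))
  have h𝒱ω : ∀ n, 𝒱 n ∈ OpenKindCovers X CoverKind.omega := by
    intro n
    have hop : ∀ W ∈ 𝒱 n, IsOpen W := by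
      rintro _ ⟨s, hs, rfl⟩
      exact isOpen_biInter_finset
        (fun i hi => (h𝒰 i).1 _ (hs i (by simpa [Nat.lt_succ_iff] using Finset.mem_range.mp hi)))
    have hfin : ∀ F : Set X, F.Finite → ∃ W ∈ 𝒱 n, F ⊆ W := by
      intro F hF
      have h := fun i => (h𝒰 i).2.2.2 F hF
      choose s hsmem hsF using h
      refine ⟨⋂ i ∈ Finset.range (n+1), s i, ⟨s, fun i _ => hsmem i, rfl⟩, ?_⟩
      intro x hx
      exact Set.mem_biInter (fun i _ => hsF i hx)
    refine ⟨hop, ?_, h𝒱ne n, hfin⟩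
    intro x
    obtain ⟨W, hW1, hW2⟩ := hfin {x} (Set.finite_singleton x)
    exact ⟨W, hW1, hW2 rfl⟩
  obtain ⟨A, hAinf, W, hW, hWfin⟩ := hPD 𝒱 h𝒱ω h𝒱ne
  have hgt : ∀ m : ℕ, ∃ n ∈ A, m < n := fun m => hAinf.exists_gt m
  choose nm hnmA hnm using hgt
  have hrep : ∀ m, ∃ s : ℕ → Set X, (∀ i ≤ nm m, s i ∈ 𝒰 i) ∧
      W (nm m) = ⋂ i ∈ Finset.range (nm m + 1), s i := fun m => hW (nm m) (hnmA m)
  choose ss hss1 hss2 using hrep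
  set sel : ℕ → Set X := fun m => ss m m with hsel
  have hselmem : ∀ m, sel m ∈ 𝒰 m := fun m => hss1 m m (le_of_lt (hnm m))
  have hselfin : ∀ x : X, {m | x ∉ sel m}.Finite := by
    intro x
    have hsub : {m | x ∉ sel m} ⊆ ⋃ n ∈ {n | n ∈ A ∧ x ∉ W n}, {m | nm m = n} := by
      intro m hm
      rw [Set.mem_setOf_eq] at hm
      have hxW : x ∉ W (nm m) := by
        intro hx
        rw [hss2 m] at hx
        apply hm
        have hmem : m ∈ Finset.range (nm m + 1) :=
          Finset.mem_range.mpr (by have := hnm m; omega)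
        exact Set.biInter_subset_of_mem (t := fun i => ss m i) hmem hx
      exact Set.mem_biUnion ⟨hnmA m, hxW⟩ rfl
    apply Set.Finite.subset _ hsub
    apply (hWfin x).biUnion
    intro n _
    apply (Set.finite_Iio n).subset
    intro m hm
    rw [Set.mem_setOf_eq] at hm
    rw [Set.mem_Iio, ← hm]
    exact hnm m
  refine ⟨sel, hselmem, ?_⟩
  refine final_gamma_cover (fun m => (h𝒰 m).1 _ (hselmem m)) ?_ hselfin
  intro m hm
  exact (h𝒰 m).2.2.1 (hm ▸ hselmem m)

end PD
section PDproducers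
variable {X : Type*} [TopologicalSpace X]

lemma TF_in_upTilde [Nonempty X] [T1Space X] (k : CoverKind)
    (hk : k = CoverKind.omega ∨ k = CoverKind.gamma)
    {𝒱 : Set (Set X)} (h : 𝒱 ∈ OpenKindCovers X k) : TF 𝒱 ∈ upTilde k (USCb X) := by
  rcases hk with rfl | rfl
  · exact TF_upperDense h.1 (fun A hA => h.2.2.2 A hA)
  · exact TF_upperSeqDense h

lemma PD_from_Sfam [Nonempty X] [T1Space X] (k : CoverKind)
    (hk : k = CoverKind.omega ∨ k = CoverKind.gamma)
    (hA : S1 (upTilde k (USCb X)) (Sfam (USCb X))) : PDprop X k := by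
  intro 𝒱 h𝒱 h𝒱ne
  obtain ⟨sel, hsel, hrng⟩ := hA (fun n => TF (𝒱 n)) (fun n => TF_in_upTilde k hk (h𝒱 n))
  obtain ⟨u, huF, hutend⟩ := hrng.2 0 zero_mem_USCb
  have hrep : ∀ j, ∃ n, sel n = u j := fun j => huF j
  choose nseq hnseq using hrep
  set A := Set.range nseq with hAdef
  have hselrep : ∀ n, ∃ U ∈ 𝒱 n, ∃ g ∈ USCb X,
      sel n = g + Uᶜ.indicator (fun _ => 1 + 2 * ⨆ z, |g z|) := fun n => hsel n
  choose U hU𝒱 g hg hUg using hselrep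
  have hoff : ∀ n x, x ∉ U n → 1 ≤ sel n x := by
    intro n x hx
    rw [hUg n]
    exact TF_off (hg n) hx
  have hAinf : A.Infinite := by
    by_contra hAf
    rw [Set.not_infinite] at hAf
    have hrange_u : Set.range u ⊆ sel '' A := by
      rintro _ ⟨j, rfl⟩
      exact ⟨nseq j, ⟨j, rfl⟩, hnseq j⟩
    have hruf : (Set.range u).Finite := (hAf.image sel).subset hrange_u
    obtain ⟨v, hv⟩ := exists_infinite_fiber_of_range_finite hruf
    have hv0 : v = 0 := by
      funext x
      simp only [Pi.zero_apply]
      by_contra hvx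
      have hxpos : 0 < |v x| := abs_pos.mpr hvx
      have hfin := finite_bad_of_tendsto (tendsto_pi_nhds.mp hutend x) hxpos
      apply hv (hfin.subset ?_)
      intro j hj
      rw [Set.mem_setOf_eq] at hj ⊢
      rw [hj]
      simp
    obtain ⟨j, hj⟩ := hv.nonempty
    rw [Set.mem_setOf_eq] at hj
    apply zero_not_mem_TF (h𝒱ne (nseq j))
    have : sel (nseq j) = (0 : X → ℝ) := by rw [hnseq j, hj, hv0]
    rw [← this]
    exact hsel (nseq j)
  refine ⟨A, hAinf, U, fun n _ => hU𝒱 n, ?_⟩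
  intro x
  have hbadj : {j | (1:ℝ) ≤ |u j x - (0 : ℝ)|}.Finite := by
    have := finite_bad_of_tendsto (tendsto_pi_nhds.mp hutend x) one_pos
    simpa using this
  apply (hbadj.image nseq).subset
  rintro n ⟨hnA, hnx⟩
  obtain ⟨j, hj⟩ := hnA
  refine ⟨j, ?_, hj⟩
  rw [Set.mem_setOf_eq]
  have huj : u j = sel n := by rw [← hj]; exact (hnseq j).symm
  rw [huj]
  simp only [sub_zero]
  exact le_trans (hoff n x hnx) (le_abs_self _)

lemma PD_from_gamma0 [Nonempty X] [T1Space X] (k : CoverKind)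
    (hk : k = CoverKind.omega ∨ k = CoverKind.gamma)
    (hA : S1 (upTilde k (USCb X)) {F | PropGamma (0 : X → ℝ) F}) : PDprop X k := by
  intro 𝒱 h𝒱 h𝒱ne
  obtain ⟨sel, hsel, hrng⟩ := hA (fun n => TF (𝒱 n)) (fun n => TF_in_upTilde k hk (h𝒱 n))
  have hrng' : PropGamma (0 : X → ℝ) (Set.range sel) := hrng
  have hselrep : ∀ n, ∃ U ∈ 𝒱 n, ∃ g ∈ USCb X,
      sel n = g + Uᶜ.indicator (fun _ => 1 + 2 * ⨆ z, |g z|) := fun n => hsel n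
  choose U hU𝒱 g hg hUg using hselrep
  have hoff : ∀ n x, x ∉ U n → 1 ≤ sel n x := by
    intro n x hx
    rw [hUg n]
    exact TF_off (hg n) hx
  classical
  set ch : (X → ℝ) → ℕ := fun f => sInf {n | sel n = f} with hch
  have hchspec : ∀ f ∈ Set.range sel, sel (ch f) = f := by
    rintro _ ⟨n, rfl⟩
    exact Nat.sInf_mem (⟨n, rfl⟩ : {m | sel m = sel n}.Nonempty)
  set A := ch '' Set.range sel with hAdef
  have hAinf : A.Infinite := by
    apply Set.Infinite.image ?_ hrng'.1
    intro f hf f' hf' he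
    rw [← hchspec f hf, ← hchspec f' hf', he]
  refine ⟨A, hAinf, U, fun n _ => hU𝒱 n, ?_⟩
  intro x
  have hfin1 : {f ∈ Set.range sel | (1:ℝ) ≤ |f x - (0 : X → ℝ) x|}.Finite :=
    hrng'.2 1 one_pos x
  apply Set.Finite.of_finite_image (f := sel)
  · apply hfin1.subset
    rintro _ ⟨n, ⟨hnA, hnx⟩, rfl⟩
    refine ⟨⟨n, rfl⟩, ?_⟩
    simp only [Pi.zero_apply, sub_zero]
    exact le_trans (hoff n x hnx) (le_abs_self _)
  · intro n hn m hm hnm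
    obtain ⟨f, hf, hfn⟩ := hn.1
    obtain ⟨f', hf', hfm⟩ := hm.1
    rw [← hfn, ← hfm] at hnm ⊢
    rw [hchspec f hf, hchspec f' hf'] at hnm
    rw [hnm]

end PDproducers
section Easy
variable {X : Type*} [TopologicalSpace X]

lemma USCb_mem_upTilde [Nonempty X] [T1Space X] (k : CoverKind)
    (hk : k = CoverKind.omega ∨ k = CoverKind.gamma) :
    USCb X ∈ upTilde k (USCb X) := by
  rcases hk with rfl | rfl
  · refine ⟨subset_rfl, ?_⟩
    rintro f hf w ⟨hw, hfw⟩
    rw [mem_closure_pi_iff]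
    intro A ε hε
    set d : X → ℝ := (A : Set X).indicator (fun x => w x - f x) with hd
    have hdH : d ∈ USCb X :=
      indicator_finite_mem_USCb A.finite_toSet (fun x => sub_nonneg.mpr (hfw x))
    have hdnn : ∀ x, 0 ≤ d x :=
      fun x => Set.indicator_nonneg (fun y _ => sub_nonneg.mpr (hfw y)) x
    set e : X → ℝ := f + d with he
    have heH : e ∈ USCb X := add_mem_USCb hf hdH
    have hfe : f ≤ e := fun x => by
      simp only [he, Pi.add_apply]; linarith [hdnn x]
    have hefH : e - f ∈ USCb X := by
      have hed : e - f = d := by funext x; simp only [he, Pi.sub_apply, Pi.add_apply]; ring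
      rw [hed]; exact hdH
    refine ⟨e, ⟨heH, hfe, hefH⟩, ?_⟩
    intro a ha
    have hda : d a = w a - f a := Set.indicator_of_mem (show a ∈ (A : Set X) from ha) _
    have hea : e a = w a := by simp only [he, Pi.add_apply, hda]; ring
    rw [hea]
    simpa using hε
  · refine ⟨subset_rfl, fun f hf => ?_⟩
    refine ⟨fun k => f + fun _ => 1/((k:ℝ)+1), fun k => ⟨?_, ?_, ?_⟩, ?_⟩
    · exact add_mem_USCb hf (const_mem_USCb _)
    · intro x; simp only [Pi.add_apply]
      have : (0:ℝ) < 1/((k:ℝ)+1) := by positivity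
      linarith
    · have : (f + fun _ => 1/((k:ℝ)+1)) - f = fun _ : X => 1/((k:ℝ)+1) := by
        funext x; simp only [Pi.sub_apply, Pi.add_apply]; ring
      rw [this]; exact const_mem_USCb _
    · rw [tendsto_pi_nhds]
      intro x
      have h1 : Filter.Tendsto (fun k : ℕ => 1/((k:ℝ)+1)) Filter.atTop (nhds 0) :=
        tendsto_one_div_add_atTop_nhds_zero_nat
      have h2 := (tendsto_const_nhds (x := f x) (f := Filter.atTop (α := ℕ))).add h1
      simpa using h2

lemma seqsep_of_S1Sfam [Nonempty X] [T1Space X] (k : CoverKind)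
    (hk : k = CoverKind.omega ∨ k = CoverKind.gamma)
    (hA : S1 (upTilde k (USCb X)) (Sfam (USCb X))) : SeqSeparableSet (USCb X) := by
  obtain ⟨sel, _hsel, hrng⟩ := hA (fun _ => USCb X) (fun _ => USCb_mem_upTilde k hk)
  exact ⟨Set.range sel, Set.countable_range sel, hrng⟩

lemma covers_from_PhiH (k : CoverKind)
    (hc : ∀ h ∈ USCb X, S1 (PhiH k h (USCb X)) (PhiH CoverKind.gamma h (USCb X)))
    (hk : k = CoverKind.omega ∨ k = CoverKind.gamma) :
    S1 (OpenKindCovers X k) (OpenKindCovers X CoverKind.gamma) := by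
  intro 𝒰 h𝒰
  classical
  set χ : Set X → (X → ℝ) := fun U => Uᶜ.indicator (fun _ => 1) with hχ
  have hval : ∀ (W : Set X) (x : X), x ∈ W ↔ χ W x = 0 := by
    intro W x
    constructor
    · intro hx
      exact Set.indicator_of_notMem (show x ∉ Wᶜ from fun h => h hx) _
    · intro hx
      by_contra hc'
      have hx' : Wᶜ.indicator (fun _ => (1:ℝ)) x = 0 := hx
      rw [Set.indicator_of_mem (show x ∈ Wᶜ from hc')] at hx'
      norm_num at hx'
  have hχinj : Function.Injective χ := by
    intro U V hUV
    ext x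
    rw [hval U x, hval V x, hUV]
  have hχH : ∀ (W : Set X), IsOpen W → χ W ∈ USCb X := fun W hW =>
    indicator_const_mem_USCb hW.isClosed_compl zero_le_one
  have hχnn : ∀ (W : Set X) (x : X), 0 ≤ χ W x :=
    fun W x => Set.indicator_nonneg (fun _ _ => zero_le_one) x
  have hFsub : ∀ n, χ '' 𝒰 n ⊆ USCb X := by
    rintro n _ ⟨U, hU, rfl⟩
    exact hχH U ((h𝒰 n).1 U hU)
  have hzero : ∀ f ∈ USCb X, (0:X→ℝ) ≤ f → f - 0 ∈ USCb X ∧ (0:X→ℝ) ≤ f := by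
    intro f hf hge
    constructor
    · rw [sub_zero]; exact hf
    · exact hge
  have hmem : ∀ n, χ '' 𝒰 n ∈ PhiH k (0 : X → ℝ) (USCb X) := by
    intro n
    refine ⟨hFsub n, ?_, ?_⟩
    · rcases hk with rfl | rfl
      · -- PropOmega
        constructor
        · rintro ⟨U, hU, hU0⟩
          have hUu : U = Set.univ := by
            ext x
            simp only [Set.mem_univ, iff_true]
            rw [hval U x, hU0]
            rfl
          exact (h𝒰 n).2.2.1 (hUu ▸ hU)
        · rw [mem_closure_pi_iff]
          intro A ε hε
          obtain ⟨U, hU, hAU⟩ := (h𝒰 n).2.2.2 (A : Set X) A.finite_toSet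
          refine ⟨χ U, ⟨U, hU, rfl⟩, ?_⟩
          intro a ha
          have : χ U a = 0 := (hval U a).mp (hAU ha)
          rw [this]
          simpa using hε
      · -- PropGamma
        constructor
        · exact Set.Infinite.image (Set.injOn_of_injective hχinj) (h𝒰 n).2.2.1
        · intro ε hε x
          apply Set.Finite.subset (((h𝒰 n).2.2.2 x).image χ)
          rintro _ ⟨⟨U, hU, rfl⟩, hfx⟩
          refine ⟨U, ⟨hU, ?_⟩, rfl⟩
          intro hxU
          rw [(hval U x).mp hxU] at hfx
          simp only [Pi.zero_apply, sub_zero, abs_zero] at hfx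
          linarith
    · rintro _ ⟨U, hU, rfl⟩
      refine ⟨fun x => by simpa using hχnn U x, ?_⟩
      rw [sub_zero]
      exact hχH U ((h𝒰 n).1 U hU)
  obtain ⟨sel, hsel, hrng⟩ := hc 0 zero_mem_USCb (fun n => χ '' 𝒰 n) hmem
  have hrep : ∀ n, ∃ U ∈ 𝒰 n, χ U = sel n := fun n => hsel n
  choose Usel hUmem hUeq using hrep
  have hrngγ : PropGamma (0 : X → ℝ) (Set.range sel) := hrng.2.1
  have hrange_eq : Set.range sel = χ '' Set.range Usel := by
    ext f
    constructor
    · rintro ⟨n, rfl⟩; exact ⟨Usel n, ⟨n, rfl⟩, hUeq n⟩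
    · rintro ⟨_, ⟨n, rfl⟩, rfl⟩; exact ⟨n, (hUeq n).symm⟩
  have hUinf : (Set.range Usel).Infinite := by
    intro hfin
    apply hrngγ.1
    rw [hrange_eq]
    exact hfin.image χ
  have hUmiss : ∀ x : X, {U ∈ Set.range Usel | x ∉ U}.Finite := by
    intro x
    have hfin1 : {f ∈ Set.range sel | (1:ℝ) ≤ |f x - (0:X→ℝ) x|}.Finite :=
      hrngγ.2 1 one_pos x
    apply Set.Finite.of_finite_image (f := χ)
    · apply hfin1.subset
      rintro _ ⟨U, ⟨⟨n, rfl⟩, hxU⟩, rfl⟩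
      refine ⟨⟨n, (hUeq n).symm⟩, ?_⟩
      have h1 : χ (Usel n) x = 1 := by
        rw [hχ]
        exact Set.indicator_of_mem (show x ∈ (Usel n)ᶜ from hxU) _
      rw [h1]
      simp
    · exact fun a _ b _ hab => hχinj hab
  refine ⟨Usel, hUmem, ?_, ?_, hUinf, hUmiss⟩
  · rintro _ ⟨n, rfl⟩
    exact (h𝒰 n).1 _ (hUmem n)
  · intro x
    obtain ⟨U, hU1, hU2⟩ := (hUinf.diff (hUmiss x)).nonempty
    exact ⟨U, hU1, not_not.mp (fun hx => hU2 ⟨hU1, hx⟩)⟩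

end Easy
section Glue
variable {X : Type*} [TopologicalSpace X]

lemma S1_upTilde_gammah [Nonempty X] (k : CoverKind)
    (hk : k = CoverKind.omega ∨ k = CoverKind.gamma)
    (hS : S1 (OpenKindCovers X k) (OpenKindCovers X CoverKind.gamma))
    {h : X → ℝ} (hh : h ∈ USCb X) :
    S1 (upTilde k (USCb X)) {F | PropGamma h F} := by
  intro S hSmem
  rcases hk with rfl | rfl
  · obtain ⟨sel, hprop, hbd⟩ :=
      upperSelect_omega hS S (fun n => hSmem n) (fun _ => h) (fun _ => hh)
    refine ⟨sel, fun n => (hprop n).1, ?_⟩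
    exact propGamma_of_sel (b := fun n => 1/((n:ℝ)+1)) (fun ε hε => finite_eps hε)
      (fun n => (hprop n).2.1) hbd (fun n => (hprop n).2.2.2)
  · set t : ℕ → (X → ℝ) := fun n => h + fun _ => 1/((n:ℝ)+1) with htdef
    have htH : ∀ n, t n ∈ USCb X := fun n => add_mem_USCb hh (const_mem_USCb _)
    obtain ⟨sel, hprop, hbd⟩ := upperSelect_gamma hS S (fun n => hSmem n) t htH
    have htx : ∀ n x, t n x = h x + 1/((n:ℝ)+1) := fun n x => rfl
    refine ⟨sel, fun n => (hprop n).1, ?_⟩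
    apply propGamma_of_sel (b := fun n => 2/((n:ℝ)+1))
    · intro ε hε
      apply (finite_eps (show (0:ℝ) < ε/2 by linarith)).subset
      intro n hn
      rw [Set.mem_setOf_eq] at hn ⊢
      have hp : (0:ℝ) < (n:ℝ)+1 := by positivity
      rw [lt_div_iff₀ hp] at hn ⊢
      linarith
    · intro n x
      have h1 := (hprop n).2.1 x
      rw [htx n x] at h1
      have : (0:ℝ) < 1/((n:ℝ)+1) := by positivity
      linarith
    · intro x
      apply (hbd x).subset
      intro n hn
      rw [Set.mem_setOf_eq] at hn ⊢
      have h1 : sel n x - t n x = sel n x - h x - 1/((n:ℝ)+1) := by rw [htx n x]; ring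
      rw [h1]
      have h2 : 2/((n:ℝ)+1) = 1/((n:ℝ)+1) + 1/((n:ℝ)+1) := by ring
      linarith [hn, h2.symm ▸ hn]
    · intro n he
      obtain ⟨x⟩ := (inferInstance : Nonempty X)
      have h1 := (hprop n).2.1 x
      rw [htx n x, he] at h1
      have : (0:ℝ) < 1/((n:ℝ)+1) := by positivity
      linarith

lemma S1_upTilde_Sfam [Nonempty X] (k : CoverKind)
    (hk : k = CoverKind.omega ∨ k = CoverKind.gamma)
    (hsep : SeqSeparableSet (USCb X))
    (hS : S1 (OpenKindCovers X k) (OpenKindCovers X CoverKind.gamma)) :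
    S1 (upTilde k (USCb X)) (Sfam (USCb X)) := by
  intro S hSmem
  obtain ⟨D, hDc, hDsd⟩ := hsep
  have hDne : D.Nonempty := by
    obtain ⟨u, hu, _⟩ := hDsd.2 0 zero_mem_USCb
    exact ⟨u 0, hu 0⟩
  obtain ⟨d, hd⟩ := hDc.exists_eq_range hDne
  set t : ℕ → (X → ℝ) := fun n => d (Nat.unpair n).1 with ht
  have htH : ∀ n, t n ∈ USCb X := fun n => hDsd.1 (by rw [hd]; exact ⟨_, rfl⟩)
  have hkey : ∃ sel : ℕ → (X → ℝ), (∀ n, sel n ∈ S n ∧ t n ≤ sel n) ∧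
      ∀ x, {n : ℕ | 1/((n:ℝ)+1) ≤ sel n x - t n x}.Finite := by
    rcases hk with rfl | rfl
    · obtain ⟨sel, hprop, hbd⟩ :=
        upperSelect_omega hS S (fun n => hSmem n) t htH
      exact ⟨sel, fun n => ⟨(hprop n).1, (hprop n).2.1⟩, hbd⟩
    · obtain ⟨sel, hprop, hbd⟩ :=
        upperSelect_gamma hS S (fun n => hSmem n) t htH
      exact ⟨sel, fun n => ⟨(hprop n).1, (hprop n).2.1⟩, hbd⟩
  obtain ⟨sel, hprop, hbd⟩ := hkey
  have hsub : ∀ n, S n ⊆ USCb X := by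
    intro n
    rcases hk with rfl | rfl
    · exact (hSmem n).1
    · exact (hSmem n).1
  refine ⟨sel, fun n => (hprop n).1, ?_, ?_⟩
  · rintro _ ⟨n, rfl⟩
    exact hsub n (hprop n).1
  · intro f hf
    obtain ⟨u, hu, hutend⟩ := hDsd.2 f hf
    have hrep : ∀ j, ∃ m, d m = u j := by
      intro j
      have := hu j
      rw [hd] at this
      exact this
    choose mj hmj using hrep
    set v : ℕ → (X → ℝ) := fun j => sel (Nat.pair (mj j) j) with hv
    refine ⟨v, fun j => ⟨Nat.pair (mj j) j, rfl⟩, ?_⟩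
    rw [tendsto_pi_nhds]
    intro x
    rw [Metric.tendsto_atTop]
    intro ε hε
    have htpair : ∀ j, t (Nat.pair (mj j) j) = u j := by
      intro j
      rw [ht]
      simp only [Nat.unpair_pair]
      exact hmj j
    obtain ⟨N1, hN1⟩ := Metric.tendsto_atTop.mp (tendsto_pi_nhds.mp hutend x) (ε/2)
      (by linarith)
    obtain ⟨N2, hN2⟩ := (hbd x).bddAbove
    obtain ⟨N3, hN3⟩ := exists_nat_gt (2/ε)
    refine ⟨max N1 (max (N2+1) N3), fun j hj => ?_⟩
    have hj1 : N1 ≤ j := le_trans (le_max_left _ _) hj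
    have hj2 : N2 + 1 ≤ j := le_trans (le_trans (le_max_left _ _) (le_max_right _ _)) hj
    have hj3 : N3 ≤ j := le_trans (le_trans (le_max_right _ _) (le_max_right _ _)) hj
    set n := Nat.pair (mj j) j with hn
    have hjn : j ≤ n := Nat.right_le_pair _ _
    have hngood : sel n x - t n x < 1/((n:ℝ)+1) := by
      by_contra hbad
      push_neg at hbad
      have hmem : n ∈ {n : ℕ | 1/((n:ℝ)+1) ≤ sel n x - t n x} := hbad
      have := hN2 hmem
      omega
    have hge' : t n x ≤ sel n x := (hprop n).2 x
    have hsmall : 1/((n:ℝ)+1) ≤ 1/((j:ℝ)+1) := by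
      apply one_div_le_one_div_of_le (by positivity)
      have : (j:ℝ) ≤ (n:ℝ) := Nat.cast_le.mpr hjn
      linarith
    have hjsmall : 1/((j:ℝ)+1) < ε/2 := by
      have hcast : (N3:ℝ) ≤ (j:ℝ) := Nat.cast_le.mpr hj3
      have h2e : 2/ε < (j:ℝ)+1 := by linarith
      rw [div_lt_iff₀ hε] at h2e
      rw [div_lt_iff₀ (show (0:ℝ) < (j:ℝ)+1 by positivity)]
      linarith
    have hu' := hN1 j hj1
    rw [Real.dist_eq] at hu' ⊢
    have htn : t n x = u j x := congrFun (htpair j) x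
    have hvx : v j x = sel n x := rfl
    rw [hvx]
    have htri : |sel n x - f x| ≤ |sel n x - t n x| + |t n x - f x| :=
      abs_sub_le (sel n x) (t n x) (f x)
    have habs1 : |sel n x - t n x| = sel n x - t n x := abs_of_nonneg (by linarith)
    have habs2 : |t n x - f x| < ε/2 := by rw [htn]; exact hu'
    linarith
end Glue


/-- For Φ ∈ {Ω, Γ} and X infinite Hausdorff, TFAE:
(a) USC*_p(X) satisfies S₁(Φ̃↑, 𝒮);
(b) USC*_p(X) is sequentially separable and X is an S₁(Φ,Γ)-space;
(c) USC*_p(X) is sequentially separable and satisfies S₁(Φ_h,Γ_h) for every h;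
(d) USC*_p(X) is sequentially separable and satisfies S₁(Γ_0̄,Γ_0̄) and
    S₁(Φ̃↑,Γ_h) for every h. -/
theorem statement10 {X : Type*} [TopologicalSpace X] [T2Space X] [Infinite X]
    (Φ : CoverKind) (hΦ : Φ = CoverKind.omega ∨ Φ = CoverKind.gamma) :
    List.TFAE [
      S1 (upTilde Φ (USCb X)) (Sfam (USCb X)),
      SeqSeparableSet (USCb X) ∧
        S1 (OpenKindCovers X Φ) (OpenKindCovers X CoverKind.gamma),
      SeqSeparableSet (USCb X) ∧
        ∀ h ∈ USCb X, S1 (PhiH Φ h (USCb X)) (PhiH CoverKind.gamma h (USCb X)),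
      SeqSeparableSet (USCb X) ∧
        S1 (PhiH CoverKind.gamma (0 : X → ℝ) (USCb X))
          (PhiH CoverKind.gamma (0 : X → ℝ) (USCb X)) ∧
        ∀ h ∈ USCb X, S1 (upTilde Φ (USCb X)) {F | PropGamma h F}] := by
  have hPDdispatch : PDprop X Φ → S1 (OpenKindCovers X Φ) (OpenKindCovers X CoverKind.gamma) := by
    intro hPDs
    rcases hΦ with rfl | rfl
    · exact PD_to_S1_omega hPDs
    · exact PD_to_S1_gamma hPDs
  tfae_have 1 → 2 := by
    intro h1
    exact ⟨seqsep_of_S1Sfam Φ hΦ h1, hPDdispatch (PD_from_Sfam Φ hΦ h1)⟩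
  tfae_have 2 → 3 := by
    rintro ⟨hsep, hS⟩
    refine ⟨hsep, fun h _hh => ?_⟩
    intro F hF
    exact core_select Φ hS hΦ F hF
  tfae_have 3 → 2 := by
    rintro ⟨hsep, hc⟩
    exact ⟨hsep, covers_from_PhiH Φ hc hΦ⟩
  tfae_have 2 → 4 := by
    rintro ⟨hsep, hS⟩
    have hγγ : S1 (OpenKindCovers X CoverKind.gamma) (OpenKindCovers X CoverKind.gamma) := by
      rcases hΦ with rfl | rfl
      · exact omega_to_gamma_S1 hS
      · exact hS
    refine ⟨hsep, ?_, fun h hh => S1_upTilde_gammah Φ hΦ hS hh⟩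
    intro F hF
    exact core_select CoverKind.gamma hγγ (Or.inr rfl) F hF
  tfae_have 4 → 2 := by
    rintro ⟨hsep, _hγ0, hup⟩
    exact ⟨hsep, hPDdispatch (PD_from_gamma0 Φ hΦ (hup 0 zero_mem_USCb))⟩
  tfae_have 2 → 1 := by
    rintro ⟨hsep, hS⟩
    exact S1_upTilde_Sfam Φ hΦ hsep hS
  tfae_finish

end Selectors
end

section
/- For every infinite Hausdorff topological space X, USC*_p(X) does not satisfy the selection principle S₁(𝒫, 𝒮): there exists a sequence ⟨Sₙ : n ∈ ω⟩ of pointwise dense subsets of USC*_p(X) such that no choice of fₙ ∈ Sₙ makes {fₙ : n ∈ ω} sequentially dense in USC*_p(X). -/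
open Set Filter Topology

namespace Selectors

variable {X : Type*}

/-- For every infinite Hausdorff space X, USC*_p(X) does not satisfy
S₁(𝒫, 𝒮). -/
theorem statement13 {X : Type*} [TopologicalSpace X] [T2Space X] [Infinite X] :
    ¬ S1 (Pfam (USCb X)) (Sfam (USCb X)) := by
  classical
  obtain ⟨x₀, x₁, hne⟩ := exists_pair_ne X
  -- the single pointwise dense set used for every n
  set S : Set (X → ℝ) := {f | f ∈ USCb X ∧ (1 ≤ |f x₀| ∨ 1 ≤ |f x₁|)} with hS
  -- spike functions witnessing pointwise density
  have hspike : ∀ x : X, ∀ y : ℝ, ∃ f ∈ S, f x = y := by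
    intro x y
    set z : X := if x = x₀ then x₁ else x₀ with hz
    have hxz : x ≠ z := by
      by_cases h : x = x₀
      · simp only [hz, if_pos h]; rw [h]; exact hne
      · simp only [hz, if_neg h]; exact h
    refine ⟨fun w => y + if w = z then 2 + |y| else 0, ⟨⟨fun a => ?_, ?_⟩, ?_⟩, ?_⟩
    · -- upper semicontinuity
      by_cases h1 : y + (2 + |y|) < a
      · have : {w : X | (y + if w = z then 2 + |y| else 0) < a} = univ := by
          ext w
          simp only [mem_setOf_eq, mem_univ, iff_true]
          split_ifs
          · linarith
          · have := abs_nonneg y; linarith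
        rw [this]; exact isOpen_univ
      · by_cases h2 : y < a
        · have : {w : X | (y + if w = z then 2 + |y| else 0) < a} = {z}ᶜ := by
            ext w
            simp only [mem_setOf_eq, mem_compl_iff, mem_singleton_iff]
            split_ifs with hw
            · constructor
              · intro h; exact absurd h (by linarith)
              · intro h; exact absurd hw h
            · simp only [add_zero]; exact ⟨fun _ => hw, fun _ => h2⟩
          rw [this]; exact isOpen_compl_singleton
        · have : {w : X | (y + if w = z then 2 + |y| else 0) < a} = ∅ := by
            ext w
            simp only [mem_setOf_eq, mem_empty_iff_false, iff_false, not_lt]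
            split_ifs
            · have := abs_nonneg y; linarith
            · linarith
          rw [this]; exact isOpen_empty
    · -- boundedness
      refine ⟨|y| + (2 + |y|), fun w => ?_⟩
      dsimp only
      split_ifs
      · refine (abs_add_le _ _).trans ?_
        rw [abs_of_nonneg (show (0:ℝ) ≤ 2 + |y| by positivity)]
      · have := abs_nonneg y; rw [add_zero]; linarith
    · -- the spike has large value at x₀ or x₁
      have hzval : (1:ℝ) ≤ |y + if z = z then 2 + |y| else 0| := by
        rw [if_pos rfl]
        have h1 : (1:ℝ) ≤ y + (2 + |y|) := by
          have := neg_abs_le y; linarith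
        exact h1.trans (le_abs_self _)
      by_cases h : x = x₀
      · right
        have : z = x₁ := by simp [hz, h]
        rw [← this]; simpa using hzval
      · left
        have : z = x₀ := by simp [hz, h]
        rw [← this]; simpa using hzval
    · simp only [if_neg hxz, add_zero]
  -- S is pointwise dense
  have hSP : S ∈ Pfam (USCb X) := by
    refine ⟨fun f hf => hf.1, fun x => ?_⟩
    have : {y : ℝ | ∃ f ∈ S, f x = y} = univ :=
      eq_univ_of_forall fun y => hspike x y
    rw [this]; exact dense_univ
  intro hS1
  obtain ⟨sel, hsel, hrange⟩ := hS1 (fun _ => S) (fun _ => hSP)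
  -- the zero function is in USCb X
  have h0 : (0 : X → ℝ) ∈ USCb X := by
    refine ⟨fun a => ?_, 0, fun x => by simp⟩
    by_cases h : (0:ℝ) < a
    · have : {x : X | (0 : X → ℝ) x < a} = univ := by ext x; simp [h]
      rw [this]; exact isOpen_univ
    · have : {x : X | (0 : X → ℝ) x < a} = ∅ := by ext x; simp [h]
      rw [this]; exact isOpen_empty
  obtain ⟨u, hu, hconv⟩ := hrange.2 0 h0
  have hun : ∀ n, 1 ≤ |u n x₀| ∨ 1 ≤ |u n x₁| := by
    intro n
    obtain ⟨m, hm⟩ := hu n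
    have : u n ∈ S := hm ▸ hsel m
    exact this.2
  have hc : ∀ x : X, Tendsto (fun n => u n x) atTop (nhds 0) := by
    intro x
    have := ((continuous_apply x).tendsto (0 : X → ℝ)).comp hconv
    simpa [Function.comp_def] using this
  have h0' : ∀ᶠ n in atTop, |u n x₀| < 1 :=
    ((hc x₀).abs.congr' (by simp)).eventually_lt_const (by norm_num : |(0:ℝ)| < 1)
  have h1' : ∀ᶠ n in atTop, |u n x₁| < 1 :=
    ((hc x₁).abs.congr' (by simp)).eventually_lt_const (by norm_num : |(0:ℝ)| < 1)
  obtain ⟨n, hn0, hn1⟩ := (h0'.and h1').exists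
  rcases hun n with h | h
  · linarith
  · linarith

end Selectors
end

section
/- Let X be an infinite Hausdorff topological space and Φ = Γ. The following are equivalent, where 0̄ denotes the constant zero function on X: (a) USC*_p(X) satisfies the selection principle S₁(Φ̃↑, 𝒫); (b) X possesses the covering property S₁(Φ,𝒪); (c) USC*_p(X) satisfies S₁(Φ_0̄,𝒪_0̄); (d) USC*_p(X) satisfies S₁(Φ̃↑,𝒪_0̄). If X possesses property (ε), the equivalences hold also for Φ = Ω. -/
open Set Filter Topology

namespace Selectors

variable {X : Type*}

section Aux
variable {X : Type*} [TopologicalSpace X]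

lemma usc_zero : IsUSCb (0 : X → ℝ) := by
  refine ⟨fun a => ?_, 0, fun x => by simp⟩
  by_cases h : (0:ℝ) < a
  · convert isOpen_univ using 1; ext x; simp [h]
  · convert isOpen_empty using 1; ext x; simp [h]

lemma usc_const (c : ℝ) : IsUSCb (fun _ : X => c) := by
  refine ⟨fun a => ?_, |c|, fun x => le_rfl⟩
  by_cases h : c < a
  · convert isOpen_univ using 1; ext x; simp [h]
  · convert isOpen_empty using 1; ext x; simp [h]

lemma IsUSCb.add {f g : X → ℝ} (hf : IsUSCb f) (hg : IsUSCb g) : IsUSCb (f + g) := by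
  obtain ⟨hfo, Mf, hMf⟩ := hf; obtain ⟨hgo, Mg, hMg⟩ := hg
  refine ⟨fun a => ?_, Mf + Mg, fun x => ?_⟩
  · have h : {x | (f+g) x < a} = ⋃ q : ℚ, ({x | f x < q} ∩ {x | g x < a - q}) := by
      ext x
      simp only [Set.mem_setOf_eq, Set.mem_iUnion, Set.mem_inter_iff, Pi.add_apply]
      constructor
      · intro h
        obtain ⟨q, hq1, hq2⟩ := exists_rat_btwn (show f x < a - g x by linarith)
        exact ⟨q, hq1, by linarith⟩
      · rintro ⟨q, h1, h2⟩; linarith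
    exact h ▸ isOpen_iUnion fun q => (hfo q).inter (hgo _)
  · simpa using (abs_add_le (f x) (g x)).trans (add_le_add (hMf x) (hMg x))

lemma IsUSCb.sub_const {f : X → ℝ} (hf : IsUSCb f) (q : ℝ) :
    IsUSCb (f - fun _ => q) := by
  have : (f - fun _ => q) = f + fun _ : X => -q := by ext x; simp [sub_eq_add_neg]
  exact this ▸ hf.add (usc_const (-q))

lemma IsUSCb.add_const {f : X → ℝ} (hf : IsUSCb f) (q : ℝ) :
    IsUSCb (f + fun _ => q) := hf.add (usc_const q)

lemma usc_indicator_compl {U : Set X} (hU : IsOpen U) {c : ℝ} (hc : 0 ≤ c) :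
    IsUSCb (Uᶜ.indicator fun _ => c) := by
  refine ⟨fun a => ?_, c, fun x => ?_⟩
  · by_cases h1 : a ≤ 0
    · convert isOpen_empty using 1
      ext x; simp only [Set.mem_setOf_eq, Set.mem_empty_iff_false, iff_false, not_lt]
      exact h1.trans (Set.indicator_apply_nonneg fun _ => hc)
    by_cases h2 : c < a
    · convert isOpen_univ using 1
      ext x; simp only [Set.mem_setOf_eq, Set.mem_univ, iff_true]
      by_cases hx : x ∈ Uᶜ
      · rw [Set.indicator_of_mem hx]; exact h2
      · rw [Set.indicator_of_notMem hx]; linarith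
    · convert hU using 1
      ext x
      simp only [Set.mem_setOf_eq]
      by_cases hx : x ∈ U
      · rw [Set.indicator_of_notMem (by simpa using hx)]; simp [hx]; linarith
      · rw [Set.indicator_of_mem (by simpa using hx)]
        simp [hx]; linarith
  · by_cases hx : x ∈ Uᶜ
    · rw [Set.indicator_of_mem hx]; exact le_of_eq (abs_of_nonneg hc)
    · rw [Set.indicator_of_notMem hx]; simpa using hc

lemma usc_finset_indicator [T1Space X] (I : Finset X) (h : X → ℝ)
    (hh : ∀ x ∈ I, 0 ≤ h x) : IsUSCb ((I : Set X).indicator h) := by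
  refine ⟨fun a => ?_, ∑ x ∈ I, |h x|, fun x => ?_⟩
  · by_cases ha : 0 < a
    · have he : {x | (I : Set X).indicator h x < a} = {x | a ≤ (I : Set X).indicator h x}ᶜ := by
        ext x; simp [not_le]
      rw [he, isOpen_compl_iff]
      have hsub : {x | a ≤ (I : Set X).indicator h x} ⊆ (I : Set X) := by
        intro x hx
        by_contra hxI
        rw [Set.mem_setOf_eq, Set.indicator_of_notMem hxI] at hx
        linarith
      exact ((I.finite_toSet.subset hsub)).isClosed
    · convert isOpen_empty using 1
      ext x; simp only [Set.mem_setOf_eq, Set.mem_empty_iff_false, iff_false, not_lt]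
      refine le_trans (by linarith) (Set.indicator_apply_nonneg fun hx => hh x (by simpa using hx))
  · by_cases hx : x ∈ (I : Set X)
    · rw [Set.indicator_of_mem hx]
      exact Finset.single_le_sum (f := fun y => |h y|) (fun y _ => abs_nonneg _) (by simpa using hx)
    · rw [Set.indicator_of_notMem hx]
      simp only [abs_zero]
      exact Finset.sum_nonneg fun y _ => abs_nonneg _

end Aux

section Aux2
variable {X : Type*} [TopologicalSpace X]

lemma bddAbove_abs_range {g : X → ℝ} (hg : IsUSCb g) :
    BddAbove (Set.range fun y => |g y|) := by
  obtain ⟨-, M, hM⟩ := hg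
  exact ⟨M, by rintro _ ⟨y, rfl⟩; exact hM y⟩

lemma csup_nonneg (g : X → ℝ) : 0 ≤ ⨆ y, |g y| :=
  Real.iSup_nonneg fun y => abs_nonneg _

lemma fU_nonneg (U : Set X) (g : X → ℝ) (x : X) : (0:ℝ) ≤ fU U g x :=
  Set.indicator_apply_nonneg fun _ => by
    have := csup_nonneg g; linarith

lemma fU_usc {U : Set X} (hU : IsOpen U) (g : X → ℝ) : IsUSCb (fU U g) :=
  usc_indicator_compl hU (by have := csup_nonneg g; linarith)

lemma fU_apply_mem {U : Set X} {x : X} (hx : x ∈ U) (g : X → ℝ) : fU U g x = 0 :=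
  Set.indicator_of_notMem (by simpa using hx) _

lemma fU_apply_not_mem {U : Set X} {x : X} (hx : x ∉ U) (g : X → ℝ) :
    fU U g x = 1 + ⨆ y, |g y| :=
  Set.indicator_of_mem (by simpa using hx) _

lemma SU_subset_USCb {𝒰 : Set (Set X)} (h𝒰 : ∀ U ∈ 𝒰, IsOpen U) :
    SU 𝒰 ⊆ USCb X := by
  rintro f ⟨U, hU, g, hg, rfl⟩
  exact (fU_usc (h𝒰 U hU) g).add hg

lemma SU_upperSeqDense [Infinite X] {𝒰 : Set (Set X)}
    (h𝒰 : 𝒰 ∈ OpenKindCovers X CoverKind.gamma) :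
    UpperSeqDenseIn (SU 𝒰) (USCb X) := by
  obtain ⟨hop, hcov, hinf, hfin⟩ := h𝒰
  refine ⟨SU_subset_USCb hop, fun f hf => ?_⟩
  set emb := hinf.natEmbedding with hemb
  set U : ℕ → Set X := fun k => (emb k : Set X) with hUdef
  have hUmem : ∀ k, U k ∈ 𝒰 := fun k => (emb k).2
  refine ⟨fun k => fU (U k) f + f, fun k => ?_, ?_⟩
  · refine ⟨⟨U k, hUmem k, f, hf, rfl⟩, ?_, ?_⟩
    · intro x; dsimp; have := fU_nonneg (U k) f x; linarith
    · have : (fU (U k) f + f) - f = fU (U k) f := by ring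
      rw [this]; exact fU_usc (hop _ (hUmem k)) f
  · rw [tendsto_pi_nhds]
    intro x
    have hfinx : {k : ℕ | x ∉ U k}.Finite := by
      have hsub : {k : ℕ | x ∉ U k} ⊆ (fun k => U k) ⁻¹' {V | V ∈ 𝒰 ∧ x ∉ V} := by
        intro k hk; exact ⟨hUmem k, hk⟩
      refine Set.Finite.subset (Set.Finite.preimage ?_ (hfin x)) hsub
      exact fun a _ b _ hab => emb.injective (Subtype.val_injective hab)
    have hev : ∀ᶠ k in atTop, x ∈ U k := by
      rw [← Nat.cofinite_eq_atTop]
      simpa using hfinx.eventually_cofinite_notMem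
    refine Tendsto.congr' ?_ tendsto_const_nhds
    filter_upwards [hev] with k hk
    simp [fU_apply_mem hk f]

lemma SU_upperDense [T1Space X] {𝒰 : Set (Set X)}
    (h𝒰 : 𝒰 ∈ OpenKindCovers X CoverKind.omega) :
    UpperDenseIn (SU 𝒰) (USCb X) := by
  obtain ⟨hop, hcov, hnuniv, hω⟩ := h𝒰
  refine ⟨SU_subset_USCb hop, fun f hf g hg => ?_⟩
  obtain ⟨hgU, hfg⟩ := hg
  rw [mem_closure_iff]
  intro O hO hgO
  obtain ⟨I, u, hu, hsub⟩ := isOpen_pi_iff.1 hO g hgO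
  obtain ⟨U, hU, hIU⟩ := hω (I : Set X) I.finite_toSet
  set s : X → ℝ := (I : Set X).indicator (g - f) with hs
  have hsUSC : IsUSCb s :=
    usc_finset_indicator I (g - f) fun x _ => sub_nonneg.2 (hfg x)
  have hsnn : ∀ x, 0 ≤ s x := fun x =>
    Set.indicator_apply_nonneg fun hx => sub_nonneg.2 (hfg x)
  set gt : X → ℝ := f + s with hgt
  have hgtUSC : IsUSCb gt := hf.add hsUSC
  set h : X → ℝ := fU U gt + gt with hh
  have hI : ∀ x ∈ I, h x = g x := by
    intro x hx
    have hxU : x ∈ U := hIU (by simpa using hx)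
    have : s x = g x - f x := Set.indicator_of_mem (by simpa using hx) _
    simp [hh, fU_apply_mem hxU, hgt, this]
  refine ⟨h, ?_, ⟨U, hU, gt, hgtUSC, rfl⟩, ?_, ?_⟩
  · apply hsub
    intro x hx
    rw [hI x (by simpa using hx)]
    exact (hu x (by simpa using hx)).2
  · intro x
    have h1 := fU_nonneg U gt x
    have h2 := hsnn x
    simp only [hh, hgt, Pi.add_apply]
    linarith
  · have : h - f = fU U gt + s := by rw [hh, hgt]; ring
    rw [this]
    exact (fU_usc (hop U hU) gt).add hsUSC

end Aux2


section Imps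
variable {X : Type*} [TopologicalSpace X]

lemma imp_a_d {Φ : CoverKind}
    (ha : S1 (upTilde Φ (USCb X)) (Pfam (USCb X))) :
    S1 (upTilde Φ (USCb X)) {F | PropO (0 : X → ℝ) F} := by
  intro S hS
  obtain ⟨sel, hsel, hsub, hpd⟩ := ha S hS
  refine ⟨sel, hsel, fun x => ?_⟩
  have hd := hpd x
  have he : {y : ℝ | ∃ f ∈ Set.range sel, f x = y} =
      (fun f : X → ℝ => f x) '' Set.range sel := rfl
  rw [he] at hd
  exact hd ((0 : X → ℝ) x)

lemma imp_d_b [T2Space X] [Infinite X] {Φ : CoverKind}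
    (hΦ : Φ = CoverKind.gamma ∨ Φ = CoverKind.omega)
    (hd : S1 (upTilde Φ (USCb X)) {F | PropO (0 : X → ℝ) F}) :
    S1 (OpenKindCovers X Φ) (OpenKindCovers X CoverKind.o) := by
  intro 𝒰s h𝒰s
  have hS : ∀ n, SU (𝒰s n) ∈ upTilde Φ (USCb X) := by
    intro n
    rcases hΦ with rfl | rfl
    · exact SU_upperSeqDense (h𝒰s n)
    · exact SU_upperDense (h𝒰s n)
  obtain ⟨sel, hsel, hP⟩ := hd (fun n => SU (𝒰s n)) hS
  choose U hU g hg heq using hsel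
  refine ⟨U, hU, ?_, ?_⟩
  · rintro V ⟨n, rfl⟩
    exact (h𝒰s n).1 _ (hU n)
  · intro x
    by_contra hx
    push_neg at hx
    have h1 : ∀ n, (1 : ℝ) ≤ sel n x := by
      intro n
      have hxn : x ∉ U n := hx (U n) ⟨n, rfl⟩
      have hb := bddAbove_abs_range (hg n)
      have hle : |g n x| ≤ ⨆ y, |g n y| := le_ciSup hb x
      rw [heq n]
      simp only [Pi.add_apply, fU_apply_not_mem hxn]
      have h2 := neg_abs_le (g n x)
      linarith
    have h0 : ((0 : X → ℝ) x) ∈ closure ((fun f : X → ℝ => f x) '' Set.range sel) := hP x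
    have hsubset : (fun f : X → ℝ => f x) '' Set.range sel ⊆ Set.Ici (1 : ℝ) := by
      rintro _ ⟨f, ⟨n, rfl⟩, rfl⟩
      exact h1 n
    have h2 : ((0 : X → ℝ) x) ∈ Set.Ici (1 : ℝ) := by
      have := closure_mono hsubset h0
      rwa [isClosed_Ici.closure_eq] at this
    simp only [Pi.zero_apply, Set.mem_Ici] at h2
    linarith

end Imps


section Imps2
variable {X : Type*} [TopologicalSpace X]

lemma exists_level_selection {Φ : CoverKind}
    (hΦ : Φ = CoverKind.gamma ∨ Φ = CoverKind.omega)
    (hb : S1 (OpenKindCovers X Φ) (OpenKindCovers X CoverKind.o))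
    (F : ℕ → Set (X → ℝ)) (hF : ∀ k, F k ∈ PhiH Φ (0 : X → ℝ) (USCb X))
    {ε : ℝ} (hε : 0 < ε) :
    ∃ g : ℕ → (X → ℝ), (∀ k, g k ∈ F k) ∧ ∀ x, ∃ k, g k x < ε := by
  have hne : ∀ k, (F k).Nonempty := by
    intro k
    obtain ⟨hsub, hkp, hcond⟩ := hF k
    rcases hΦ with rfl | rfl
    · exact hkp.1.nonempty
    · exact closure_nonempty_iff.1 ⟨0, hkp.2⟩
  by_cases hA : ∃ k, ∃ f ∈ F k, ∀ x, f x < ε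
  · obtain ⟨k₀, f₀, hf₀, hf₀'⟩ := hA
    refine ⟨fun k => if k = k₀ then f₀ else (hne k).some, fun k => ?_,
      fun x => ⟨k₀, by simpa using hf₀' x⟩⟩
    by_cases h : k = k₀
    · subst h; simpa using hf₀
    · simpa [h] using (hne k).some_mem
  · push_neg at hA
    set 𝒰 : ℕ → Set (Set X) := fun k => (fun f : X → ℝ => {x | f x < ε}) '' F k with h𝒰
    have hopens : ∀ k, ∀ V ∈ 𝒰 k, IsOpen V := by
      rintro k V ⟨f, hf, rfl⟩
      exact ((hF k).1 hf).1 ε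
    have hmem : ∀ k, 𝒰 k ∈ OpenKindCovers X Φ := by
      intro k
      obtain ⟨hsub, hkp, hcond⟩ := hF k
      rcases hΦ with rfl | rfl
      · -- gamma
        obtain ⟨hinf, hfin⟩ := hkp
        refine ⟨hopens k, ?_, ?_, ?_⟩
        · -- cover
          intro x
          obtain ⟨f, hfF, hfB⟩ := (hinf.diff (hfin ε hε x)).nonempty
          simp only [Set.mem_sep_iff, not_and, not_le] at hfB
          have hfx : |f x - (0 : X → ℝ) x| < ε := hfB hfF
          rw [Pi.zero_apply, sub_zero] at hfx
          exact ⟨{x | f x < ε}, Set.mem_image_of_mem _ hfF,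
            lt_of_le_of_lt (le_abs_self _) hfx⟩
        · -- infinite
          have hfib : ∀ V ∈ 𝒰 k, {f | f ∈ F k ∧ {x | f x < ε} = V}.Finite := by
            intro V hV
            by_contra hfi
            have hfibinf : Set.Infinite {f | f ∈ F k ∧ {x | f x < ε} = V} := hfi
            have hVuniv : ∀ x, x ∈ V := by
              intro x
              obtain ⟨f, hf1, hf2⟩ := (hfibinf.diff (hfin ε hε x)).nonempty
              simp only [Set.mem_diff, Set.mem_sep_iff, not_and, not_le] at hf2
              have hfx : |f x - (0 : X → ℝ) x| < ε := hf2 hf1.1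
              rw [Pi.zero_apply, sub_zero] at hfx
              rw [← hf1.2]
              exact lt_of_le_of_lt (le_abs_self _) hfx
            obtain ⟨f₀, hf₀⟩ := hfibinf.nonempty
            obtain ⟨x, hx⟩ := hA k f₀ hf₀.1
            have : x ∈ {x | f₀ x < ε} := hf₀.2 ▸ hVuniv x
            simp only [Set.mem_setOf_eq] at this
            linarith
          intro hUf
          have : (F k).Finite := by
            refine Set.Finite.subset (Set.Finite.biUnion hUf hfib) ?_
            intro f hf
            exact Set.mem_biUnion (Set.mem_image_of_mem _ hf) ⟨hf, rfl⟩
          exact hinf this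
        · -- per point
          intro x
          refine Set.Finite.subset (((hfin ε hε x)).image fun f => {x | f x < ε}) ?_
          rintro V ⟨⟨f, hf, rfl⟩, hxV⟩
          simp only [Set.mem_setOf_eq, not_lt] at hxV
          refine Set.mem_image_of_mem _ ⟨hf, ?_⟩
          rw [Pi.zero_apply, sub_zero]
          exact hxV.trans (le_abs_self _)
      · -- omega
        obtain ⟨h0n, hcl⟩ := hkp
        refine ⟨hopens k, ?_, ?_, ?_⟩
        · -- cover
          intro x
          have hO : IsOpen {u : X → ℝ | u x < ε} := by
            exact isOpen_Iio.preimage (continuous_apply x)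
          obtain ⟨f, hfO, hfF⟩ := mem_closure_iff.1 hcl _ hO (by simpa using hε)
          exact ⟨{x | f x < ε}, Set.mem_image_of_mem _ hfF, hfO⟩
        · -- univ not mem
          rintro ⟨f, hf, hfeq⟩
          obtain ⟨x, hx⟩ := hA k f hf
          have hx2 : x ∈ (fun f : X → ℝ => {x | f x < ε}) f := by rw [hfeq]; trivial
          have : f x < ε := hx2
          linarith
        · -- finite subsets
          intro t ht
          have hO : IsOpen (⋂ x ∈ t, {u : X → ℝ | u x < ε}) :=
            ht.isOpen_biInter fun x _ => isOpen_Iio.preimage (continuous_apply x)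
          have h0O : (0 : X → ℝ) ∈ ⋂ x ∈ t, {u : X → ℝ | u x < ε} := by
            simp only [Set.mem_iInter, Set.mem_setOf_eq, Pi.zero_apply]
            exact fun _ _ => hε
          obtain ⟨f, hfO, hfF⟩ := mem_closure_iff.1 hcl _ hO h0O
          refine ⟨{x | f x < ε}, Set.mem_image_of_mem _ hfF, fun x hx => ?_⟩
          simp only [Set.mem_iInter, Set.mem_setOf_eq] at hfO
          exact hfO x hx
    obtain ⟨sel, hsel, hopen', hcover⟩ := hb 𝒰 hmem
    choose g hgF hgeq using hsel
    refine ⟨g, hgF, fun x => ?_⟩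
    obtain ⟨V, ⟨k, rfl⟩, hxV⟩ := hcover x
    rw [← hgeq k] at hxV
    exact ⟨k, hxV⟩

lemma imp_b_c {Φ : CoverKind}
    (hΦ : Φ = CoverKind.gamma ∨ Φ = CoverKind.omega)
    (hb : S1 (OpenKindCovers X Φ) (OpenKindCovers X CoverKind.o)) :
    S1 (PhiH Φ (0 : X → ℝ) (USCb X)) (PhiH CoverKind.o (0 : X → ℝ) (USCb X)) := by
  intro F hF
  set e : ℕ ≃ ℕ × ℕ := (Denumerable.eqv (ℕ × ℕ)).symm with he
  have hsel : ∀ j : ℕ, ∃ g : ℕ → (X → ℝ),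
      (∀ k, g k ∈ F (e.symm (k, j))) ∧ ∀ x, ∃ k, g k x < 1 / (j + 1) := by
    intro j
    exact exists_level_selection hΦ hb (fun k => F (e.symm (k, j))) (fun k => hF _)
      (by positivity)
  choose G hG1 hG2 using hsel
  have hmem : ∀ n, G (e n).2 (e n).1 ∈ F n := by
    intro n
    have h := hG1 (e n).2 (e n).1
    rwa [Prod.mk.eta, Equiv.symm_apply_apply] at h
  refine ⟨fun n => G (e n).2 (e n).1, hmem, ?_, ?_, ?_⟩
  · rintro f ⟨n, rfl⟩
    exact (hF n).1 (hmem n)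
  · intro x
    rw [Metric.mem_closure_iff]
    intro δ hδ
    obtain ⟨j, hj⟩ := exists_nat_one_div_lt hδ
    obtain ⟨k, hk⟩ := hG2 j x
    have hidx : G (e (e.symm (k, j))).2 (e (e.symm (k, j))).1 = G j k := by
      rw [Equiv.apply_symm_apply]
    have hmem2 : G j k ∈ F (e.symm (k, j)) := hG1 j k
    have h0le : (0 : ℝ) ≤ G j k x := by
      have := ((hF (e.symm (k, j))).2.2 _ hmem2).1 x
      simpa using this
    refine ⟨G j k x, ⟨G j k, ⟨e.symm (k, j), hidx⟩, rfl⟩, ?_⟩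
    rw [Real.dist_eq, Pi.zero_apply, zero_sub, abs_neg, abs_of_nonneg h0le]
    calc G j k x < 1 / (↑j + 1) := hk
      _ < δ := hj
  · rintro f ⟨n, rfl⟩
    exact (hF n).2.2 _ (hmem n)

end Imps2


section Imps3
variable {X : Type*} [TopologicalSpace X]

lemma imp_c_d {Φ : CoverKind}
    (hΦ : Φ = CoverKind.gamma ∨ Φ = CoverKind.omega)
    (hc : S1 (PhiH Φ (0 : X → ℝ) (USCb X)) (PhiH CoverKind.o (0 : X → ℝ) (USCb X))) :
    S1 (upTilde Φ (USCb X)) {F | PropO (0 : X → ℝ) F} := by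
  intro S hS
  by_cases h0 : ∃ n, (0 : X → ℝ) ∈ S n
  · obtain ⟨n₀, hn₀⟩ := h0
    have hne : ∀ n, (S n).Nonempty := by
      intro n
      rcases hΦ with rfl | rfl
      · obtain ⟨-, h2⟩ := hS n
        obtain ⟨u, hu, -⟩ := h2 0 usc_zero
        exact ⟨u 0, (hu 0).1⟩
      · obtain ⟨-, h2⟩ := hS n
        have h3 := h2 0 usc_zero (show (0 : X → ℝ) ∈ {g | g ∈ USCb X ∧ (0:X→ℝ) ≤ g}
          from ⟨usc_zero, le_rfl⟩)
        obtain ⟨f, hf⟩ := closure_nonempty_iff.1 ⟨0, h3⟩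
        exact ⟨f, hf.1⟩
    refine ⟨fun n => if n = n₀ then 0 else (hne n).some, fun n => ?_, fun x => ?_⟩
    · by_cases h : n = n₀
      · subst h; simpa using hn₀
      · simpa [h] using (hne n).some_mem
    · apply subset_closure
      refine ⟨(fun n => if n = n₀ then (0 : X → ℝ) else (hne n).some) n₀, ⟨n₀, rfl⟩, ?_⟩
      simp
  · push_neg at h0
    rcases hΦ with rfl | rfl
    · -- gamma case
      have hseq : ∀ n, ∃ u : ℕ → (X → ℝ),
          (∀ k, u k ∈ S n ∧ (0 : X → ℝ) ≤ u k ∧ u k - 0 ∈ USCb X) ∧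
          Tendsto u atTop (nhds 0) := fun n => (hS n).2 0 usc_zero
      choose u hu htend using hseq
      have htendx : ∀ n x, Tendsto (fun k => u n k x) atTop (nhds 0) := by
        intro n x
        have := tendsto_pi_nhds.1 (htend n) x
        simpa using this
      have hfinset : ∀ n x (ε : ℝ), 0 < ε → {k | ε ≤ |u n k x|}.Finite := by
        intro n x ε hε
        obtain ⟨N, hN⟩ := Metric.tendsto_atTop.1 (htendx n x) ε hε
        refine (Set.finite_Iio N).subset ?_
        intro k hk
        simp only [Set.mem_setOf_eq] at hk
        by_contra hkN
        simp only [Set.mem_Iio, not_lt] at hkN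
        have := hN k hkN
        rw [Real.dist_eq, sub_zero] at this
        linarith
      have hFm : ∀ n, Set.range (u n) ∈ PhiH CoverKind.gamma (0 : X → ℝ) (USCb X) := by
        intro n
        refine ⟨?_, ⟨?_, ?_⟩, ?_⟩
        · rintro f ⟨k, rfl⟩; exact (hS n).1 (hu n k).1
        · -- range infinite
          intro hfin
          have hex : ∃ g ∈ Set.range (u n), {k | u n k = g}.Infinite := by
            by_contra hnex
            push_neg at hnex
            have huniv : (Set.univ : Set ℕ) ⊆ ⋃ g ∈ Set.range (u n), {k | u n k = g} := by
              intro k _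
              exact Set.mem_biUnion ⟨k, rfl⟩ rfl
            have : (Set.univ : Set ℕ).Finite :=
              (Set.Finite.biUnion hfin fun g hg => hnex g hg).subset huniv
            exact Set.infinite_univ this
          obtain ⟨g, hgr, hginf⟩ := hex
          have hg0 : g = 0 := by
            funext x
            by_contra hgx
            have hεpos : 0 < |g x| := abs_pos.2 (by simpa using hgx)
            have hsub : {k | u n k = g} ⊆ {k | |g x| ≤ |u n k x|} := by
              intro k hk
              simp only [Set.mem_setOf_eq] at hk ⊢
              rw [hk]
            exact hginf ((hfinset n x _ hεpos).subset hsub)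
          rw [hg0] at hgr
          obtain ⟨k, hk⟩ := hgr
          exact h0 n (hk ▸ (hu n k).1)
        · -- gamma finiteness
          intro ε hε x
          refine ((hfinset n x ε hε).image (u n)).subset ?_
          rintro f ⟨⟨k, rfl⟩, hfx⟩
          refine Set.mem_image_of_mem _ ?_
          simp only [Set.mem_setOf_eq]
          rw [Pi.zero_apply, sub_zero] at hfx
          exact hfx
        · rintro f ⟨k, rfl⟩
          exact ⟨(hu n k).2.1, (hu n k).2.2⟩
      obtain ⟨sel, hsel, hP⟩ := hc (fun n => Set.range (u n)) hFm
      refine ⟨sel, fun n => ?_, hP.2.1⟩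
      obtain ⟨k, hk⟩ := hsel n
      exact hk ▸ (hu n k).1
    · -- omega case
      set Fn : ℕ → Set (X → ℝ) :=
        fun n => {g | g ∈ S n ∧ (0 : X → ℝ) ≤ g ∧ g - 0 ∈ USCb X} with hFn
      have hFm : ∀ n, Fn n ∈ PhiH CoverKind.omega (0 : X → ℝ) (USCb X) := by
        intro n
        refine ⟨fun g hg => (hS n).1 hg.1, ⟨fun hmem => h0 n hmem.1, ?_⟩, fun f hf => hf.2⟩
        exact (hS n).2 0 usc_zero ⟨usc_zero, le_rfl⟩
      obtain ⟨sel, hsel, hP⟩ := hc Fn hFm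
      exact ⟨sel, fun n => (hsel n).1, hP.2.1⟩

end Imps3


section Imps4
variable {X : Type*} [TopologicalSpace X]

lemma cont_sub_const (q : ℝ) : Continuous fun v : X → ℝ => v - fun _ : X => q := by
  apply continuous_pi
  intro x
  exact (continuous_apply x).sub continuous_const

lemma translate_upperSeqDense {S : Set (X → ℝ)}
    (hS : UpperSeqDenseIn S (USCb X)) (q : ℝ) :
    UpperSeqDenseIn ((fun h => h - fun _ : X => q) '' S) (USCb X) := by
  obtain ⟨hsub, hdense⟩ := hS
  constructor
  · rintro _ ⟨h, hh, rfl⟩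
    exact (hsub hh).sub_const q
  · intro f hf
    obtain ⟨u, hu, htend⟩ := hdense (f + fun _ => q) (hf.add_const q)
    refine ⟨fun k => u k - fun _ => q, fun k => ?_, ?_⟩
    · obtain ⟨h1, h2, h3⟩ := hu k
      refine ⟨⟨u k, h1, rfl⟩, ?_, ?_⟩
      · intro x
        have := h2 x
        simp only [Pi.add_apply, Pi.sub_apply] at this ⊢
        linarith
      · have he : (u k - fun _ => q) - f = u k - (f + fun _ => q) := by ring
        rw [he]; exact h3
    · have := ((cont_sub_const (X := X) q).tendsto _).comp htend
      have he : (f + fun _ : X => q) - (fun _ : X => q) = f := by ring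
      rwa [he] at this

lemma translate_upperDense {S : Set (X → ℝ)}
    (hS : UpperDenseIn S (USCb X)) (q : ℝ) :
    UpperDenseIn ((fun h => h - fun _ : X => q) '' S) (USCb X) := by
  obtain ⟨hsub, hdense⟩ := hS
  refine ⟨?_, fun f hf g hg => ?_⟩
  · rintro _ ⟨h, hh, rfl⟩
    exact (hsub hh).sub_const q
  obtain ⟨hgU, hfg⟩ := hg
  have h1 : g + (fun _ : X => q) ∈ {g' | g' ∈ USCb X ∧ (f + fun _ : X => q) ≤ g'} := by
    refine ⟨hgU.add_const q, fun x => ?_⟩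
    have := hfg x
    simp only [Pi.add_apply]
    linarith
  have h2 := hdense (f + fun _ => q) (hf.add_const q) h1
  have h3 := image_closure_subset_closure_image (cont_sub_const (X := X) q)
    (Set.mem_image_of_mem _ h2)
  have himg : (fun v : X → ℝ => v - fun _ => q) ''
      {h | h ∈ S ∧ (f + fun _ => q) ≤ h ∧ h - (f + fun _ => q) ∈ USCb X} ⊆
      {g' | g' ∈ ((fun h => h - fun _ : X => q) '' S) ∧ f ≤ g' ∧ g' - f ∈ USCb X} := by
    rintro _ ⟨h, ⟨hhS, hle, hd⟩, rfl⟩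
    refine ⟨⟨h, hhS, rfl⟩, fun x => ?_, ?_⟩
    · have := hle x
      simp only [Pi.add_apply, Pi.sub_apply] at this ⊢
      linarith
    · have he : (h - fun _ : X => q) - f = h - (f + fun _ => q) := by ring
      rw [he]; exact hd
  have h4 := closure_mono himg h3
  have he : (g + fun _ : X => q) - (fun _ : X => q) = g := by ring
  rwa [he] at h4

lemma imp_d_a {Φ : CoverKind}
    (hΦ : Φ = CoverKind.gamma ∨ Φ = CoverKind.omega)
    (hd : S1 (upTilde Φ (USCb X)) {F | PropO (0 : X → ℝ) F}) :
    S1 (upTilde Φ (USCb X)) (Pfam (USCb X)) := by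
  intro S hS
  have hSsub : ∀ n, S n ⊆ USCb X := by
    intro n
    rcases hΦ with rfl | rfl
    · exact (hS n).1
    · exact (hS n).1
  set e : ℕ ≃ ℕ × ℕ := (Denumerable.eqv (ℕ × ℕ)).symm with he
  set q : ℕ → ℚ := fun n => (Denumerable.eqv ℚ).symm n with hq
  have hT : ∀ j k : ℕ,
      ((fun h => h - fun _ : X => (q j : ℝ)) '' S (e.symm (k, j))) ∈ upTilde Φ (USCb X) := by
    intro j k
    rcases hΦ with rfl | rfl
    · exact translate_upperSeqDense (hS _) _
    · exact translate_upperDense (hS _) _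
  have hsel : ∀ j : ℕ, ∃ g : ℕ → (X → ℝ),
      (∀ k, g k ∈ (fun h => h - fun _ : X => (q j : ℝ)) '' S (e.symm (k, j))) ∧
      PropO (0 : X → ℝ) (Set.range g) :=
    fun j => hd _ (hT j)
  choose G hG1 hG2 using hsel
  set sel : ℕ → (X → ℝ) := fun n => G (e n).2 (e n).1 + fun _ => (q (e n).2 : ℝ) with hseldef
  have hselS : ∀ n, sel n ∈ S n := by
    intro n
    obtain ⟨h, hh, heq2⟩ := hG1 (e n).2 (e n).1
    rw [Prod.mk.eta, Equiv.symm_apply_apply] at hh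
    have hsn : sel n = h := by
      rw [hseldef]
      dsimp only
      rw [← heq2]
      ring
    rw [hsn]
    exact hh
  refine ⟨sel, hselS, ?_, ?_⟩
  · rintro f ⟨n, rfl⟩
    exact hSsub n (hselS n)
  · intro x
    intro r
    have hQ : ∀ j : ℕ, ((q j : ℝ)) ∈ closure {y | ∃ f ∈ Set.range sel, f x = y} := by
      intro j
      have h0 : (0 : ℝ) ∈ closure ((fun f : X → ℝ => f x) '' Set.range (G j)) := by
        have := hG2 j x
        simpa using this
      have hcont : Continuous fun y : ℝ => y + (q j : ℝ) := continuous_id.add continuous_const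
      have h1 := image_closure_subset_closure_image hcont (Set.mem_image_of_mem _ h0)
      have himg : (fun y : ℝ => y + (q j : ℝ)) ''
          ((fun f : X → ℝ => f x) '' Set.range (G j)) ⊆
          {y | ∃ f ∈ Set.range sel, f x = y} := by
        rintro _ ⟨_, ⟨_, ⟨k, rfl⟩, rfl⟩, rfl⟩
        refine ⟨sel (e.symm (k, j)), ⟨_, rfl⟩, ?_⟩
        show sel (e.symm (k, j)) x = G j k x + (q j : ℝ)
        rw [hseldef]
        simp [Equiv.apply_symm_apply]
      have h2 := closure_mono himg h1
      simpa using h2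
    have hrange : Set.range ((↑) : ℚ → ℝ) ⊆ closure {y | ∃ f ∈ Set.range sel, f x = y} := by
      rintro _ ⟨q', rfl⟩
      have hq' : q' = q ((Denumerable.eqv ℚ) q') := by
        rw [hq]; simp
      rw [hq']
      exact hQ _
    have h4 : r ∈ closure (Set.range ((↑) : ℚ → ℝ)) := Rat.denseRange_cast r
    have h5 := closure_mono hrange h4
    rwa [closure_closure] at h5

end Imps4


/-- For Φ = Γ (or Φ = Ω provided X has property (ε)) and X infinite
Hausdorff, TFAE:
(a) USC*_p(X) satisfies S₁(Φ̃↑, 𝒫);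
(b) X possesses the covering property S₁(Φ,𝒪);
(c) USC*_p(X) satisfies S₁(Φ_0̄,𝒪_0̄);
(d) USC*_p(X) satisfies S₁(Φ̃↑,𝒪_0̄). -/
theorem statement14 {X : Type*} [TopologicalSpace X] [T2Space X] [Infinite X]
    (Φ : CoverKind) (hΦ : Φ = CoverKind.gamma ∨ (Φ = CoverKind.omega ∧ PropEps X)) :
    List.TFAE [
      S1 (upTilde Φ (USCb X)) (Pfam (USCb X)),
      S1 (OpenKindCovers X Φ) (OpenKindCovers X CoverKind.o),
      S1 (PhiH Φ (0 : X → ℝ) (USCb X)) (PhiH CoverKind.o (0 : X → ℝ) (USCb X)),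
      S1 (upTilde Φ (USCb X)) {F | PropO (0 : X → ℝ) F}] := by
  have hΦ' : Φ = CoverKind.gamma ∨ Φ = CoverKind.omega := hΦ.imp id And.left
  tfae_have 1 → 4 := fun h => imp_a_d h
  tfae_have 4 → 2 := fun h => imp_d_b hΦ' h
  tfae_have 2 → 3 := fun h => imp_b_c hΦ' h
  tfae_have 3 → 4 := fun h => imp_c_d hΦ' h
  tfae_have 4 → 1 := fun h => imp_d_a hΦ' h
  tfae_finish

end Selectors
end
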